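/- arXiv:2003.04040 — 4 statements merged into one kernel-verified Lean document; each statement's English description precedes it below -/
import Mathlib

section
/- Let d ≥ 1 be an integer, δ > 1, 0 < γ < δ/(δ+1), β > 0 and q > 0. Define ρ : [0,∞) → [0,1] by ρ(r) = min(1, q·r^(−δ)) for r > 0 (and ρ(0) = 1), and set I_ρ = ∫_{ℝ^d} ρ(|z|^d) dz. Let s, t ∈ (0,1] with s ≤ t, and let x, y ∈ ℝ^d satisfy |x−y|^d ≥ q^(1/δ) · β · s^(−γ) · t^(γ−1). Then ∫_t^1 ∫_{ℝ^d} ρ(β^(−1) t^γ u^(1−γ) |x−z|^d) · ρ(β^(−1) s^γ u^(1−γ) |z−y|^d) dz du ≤ I_ρ · C₁ · q · (β^(−1) s^γ t^(1−γ) |x−y|^d)^(−δ), where C₁ = β·2^(dδ+1)/(δ(1−γ)−γ). -/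
open MeasureTheory

private lemma aux_scale {d : ℕ} (hd : 1 ≤ d) (g : ℝ → ENNReal) (hg : Measurable g)
    {c : ℝ} (hc : 0 < c) (w : EuclideanSpace ℝ (Fin d)) :
    ∫⁻ z : EuclideanSpace ℝ (Fin d), g (c * ‖z - w‖ ^ d) =
      ENNReal.ofReal c⁻¹ * ∫⁻ z : EuclideanSpace ℝ (Fin d), g (‖z‖ ^ d) := by
  have hdR : ((d : ℝ)) ≠ 0 := by
    have : (0:ℝ) < d := by exact_mod_cast hd
    exact this.ne'
  set R : ℝ := c ^ ((d : ℝ)⁻¹) with hRdef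
  have hR0 : 0 < R := Real.rpow_pos_of_pos hc _
  have hRd : R ^ d = c := by
    rw [← Real.rpow_natCast R d, hRdef, ← Real.rpow_mul hc.le, inv_mul_cancel₀ hdR,
      Real.rpow_one]
  have hmeas : Measurable fun z : EuclideanSpace ℝ (Fin d) => g (‖z‖ ^ d) :=
    hg.comp (measurable_norm.pow_const d)
  have step1 : ∫⁻ z : EuclideanSpace ℝ (Fin d), g (c * ‖z - w‖ ^ d) =
      ∫⁻ z : EuclideanSpace ℝ (Fin d), g (c * ‖z‖ ^ d) :=
    lintegral_sub_right_eq_self (fun z : EuclideanSpace ℝ (Fin d) => g (c * ‖z‖ ^ d)) w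
  have step2 : ∀ z : EuclideanSpace ℝ (Fin d), c * ‖z‖ ^ d = ‖R • z‖ ^ d := by
    intro z
    rw [norm_smul, Real.norm_eq_abs, abs_of_pos hR0, mul_pow, hRd]
  rw [step1]
  simp_rw [step2]
  calc ∫⁻ z : EuclideanSpace ℝ (Fin d), g (‖R • z‖ ^ d)
      = ∫⁻ z, g (‖z‖ ^ d)
          ∂(Measure.map (fun z : EuclideanSpace ℝ (Fin d) => R • z) volume) :=
        (lintegral_map hmeas (measurable_id.const_smul R)).symm
    _ = ENNReal.ofReal c⁻¹ * ∫⁻ z : EuclideanSpace ℝ (Fin d), g (‖z‖ ^ d) := by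
        rw [Measure.map_addHaar_smul volume hR0.ne', lintegral_smul_measure,
          finrank_euclideanSpace_fin, hRd, abs_of_pos (inv_pos.2 hc), smul_eq_mul]

set_option maxHeartbeats 2000000 in
/-- Analytic content of Lemma 2.2: in the weight-dependent random connection model with
preferential attachment kernel and profile `ρ(r) = min(1, q r^(-δ))`, the expected number of
common younger neighbours of two distant vertices `(x,t)` and `(y,s)` is at most
`I_ρ · C₁` times their direct connection probability `q (β⁻¹ s^γ t^(1-γ) |x-y|^d)^(-δ)`,
where `C₁ = β 2^(dδ+1)/(δ(1-γ)-γ)` and `I_ρ = ∫_{ℝ^d} ρ(|z|^d) dz`. -/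
theorem two_connection_estimate (d : ℕ) (hd : 1 ≤ d) (δ γ β q : ℝ) (hδ : 1 < δ)
    (hγ0 : 0 < γ) (hγ : γ < δ / (δ + 1)) (hβ : 0 < β) (hq : 0 < q)
    (ρ : ℝ → ℝ) (hρ0 : ρ 0 = 1)
    (hρ : ∀ r : ℝ, 0 < r → ρ r = min 1 (q * r ^ (-δ)))
    (s t : ℝ) (hs : 0 < s) (hst : s ≤ t) (ht : t ≤ 1)
    (x y : EuclideanSpace ℝ (Fin d))
    (hxy : q ^ (1 / δ) * β * s ^ (-γ) * t ^ (γ - 1) ≤ ‖x - y‖ ^ d) :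
    ∫⁻ u in Set.Ioc t 1, ∫⁻ z : EuclideanSpace ℝ (Fin d),
        ENNReal.ofReal (ρ (β⁻¹ * t ^ γ * u ^ (1 - γ) * ‖x - z‖ ^ d) *
          ρ (β⁻¹ * s ^ γ * u ^ (1 - γ) * ‖z - y‖ ^ d)) ≤
      ENNReal.ofReal ((∫ z : EuclideanSpace ℝ (Fin d), ρ (‖z‖ ^ d)) *
        (β * 2 ^ ((d : ℝ) * δ + 1) / (δ * (1 - γ) - γ)) * q *
        (β⁻¹ * s ^ γ * t ^ (1 - γ) * ‖x - y‖ ^ d) ^ (-δ)) := by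
  have ht0 : 0 < t := lt_of_lt_of_le hs hst
  have hδ0 : 0 < δ := lt_trans one_pos hδ
  have hγ1 : γ < 1 := by
    have h1 : δ / (δ + 1) < 1 := (div_lt_one (by linarith)).2 (by linarith)
    linarith
  have hγδ : γ * (δ + 1) < δ := (lt_div_iff₀ (by linarith)).1 hγ
  have hp1 : 1 < (1 - γ) * (δ + 1) := by nlinarith
  have hd0 : (0:ℝ) < d := by exact_mod_cast hd
  have hrpos : 0 < ‖x - y‖ := by
    by_contra hcon
    push_neg at hcon
    have h0 : ‖x - y‖ = 0 := le_antisymm hcon (norm_nonneg _)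
    have hpos : (0:ℝ) < q ^ (1 / δ) * β * s ^ (-γ) * t ^ (γ - 1) := by positivity
    rw [h0, zero_pow (by omega : d ≠ 0)] at hxy
    linarith
  haveI : Nonempty (Fin d) := ⟨⟨0, hd⟩⟩
  haveI hnt : Nontrivial (EuclideanSpace ℝ (Fin d)) := by
    refine nontrivial_of_ne (EuclideanSpace.single ⟨0, hd⟩ (1:ℝ)) 0 ?_
    intro h
    have h2 := congrArg norm h
    rw [EuclideanSpace.norm_single, norm_zero] at h2
    norm_num at h2
  set φ : ℝ → ℝ := fun v => min 1 (q * v ^ (-δ)) with hφdef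
  have hφ_nonneg : ∀ v : ℝ, 0 ≤ v → 0 ≤ φ v := fun v hv =>
    le_min zero_le_one (mul_nonneg hq.le (Real.rpow_nonneg hv _))
  have hφ_le_one : ∀ v : ℝ, φ v ≤ 1 := fun v => min_le_left _ _
  have hφ_le : ∀ v : ℝ, φ v ≤ q * v ^ (-δ) := fun v => min_le_right _ _
  have hφm : Measurable φ := by
    apply Measurable.min measurable_const
    exact (measurable_id.pow_const (-δ)).const_mul q
  set L : ENNReal := ∫⁻ z : EuclideanSpace ℝ (Fin d), ENNReal.ofReal (φ (‖z‖ ^ d)) with hLdef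
  -- integrability of the profile function
  have hφint : Integrable (fun z : EuclideanSpace ℝ (Fin d) => φ (‖z‖ ^ d)) := by
    have hdlt : (Module.finrank ℝ (EuclideanSpace ℝ (Fin d)) : ℝ) < (d:ℝ) * δ := by
      rw [finrank_euclideanSpace_fin]; nlinarith
    have hbase : Integrable
        (fun z : EuclideanSpace ℝ (Fin d) => (1 + ‖z‖) ^ (-((d:ℝ) * δ))) :=
      integrable_one_add_norm hdlt
    refine (hbase.const_mul ((1 + q) * 2 ^ ((d:ℝ) * δ))).mono' ?_ ?_
    · exact (hφm.comp (measurable_norm.pow_const d)).aestronglyMeasurable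
    · refine ae_of_all _ fun z => ?_
      have hz0 : (0:ℝ) ≤ ‖z‖ := norm_nonneg z
      have habs : ‖φ (‖z‖ ^ d)‖ = φ (‖z‖ ^ d) :=
        Real.norm_of_nonneg (hφ_nonneg _ (by positivity))
      rw [habs]
      rcases le_total ‖z‖ 1 with hz1 | hz1
      · refine le_trans (hφ_le_one _) ?_
        have h2 : (2:ℝ) ^ (-((d:ℝ) * δ)) ≤ (1 + ‖z‖) ^ (-((d:ℝ) * δ)) :=
          Real.rpow_le_rpow_of_nonpos (by linarith) (by linarith)
            (neg_nonpos.2 (by positivity))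
        calc (1:ℝ) = 1 * ((2:ℝ) ^ ((d:ℝ) * δ) * (2:ℝ) ^ (-((d:ℝ) * δ))) := by
              rw [← Real.rpow_add (by norm_num : (0:ℝ) < 2)]; norm_num
          _ ≤ (1 + q) * ((2:ℝ) ^ ((d:ℝ) * δ) * (1 + ‖z‖) ^ (-((d:ℝ) * δ))) := by
              refine mul_le_mul (by linarith) ?_ (by positivity) (by linarith)
              exact mul_le_mul_of_nonneg_left h2 (by positivity)
          _ = (1 + q) * 2 ^ ((d:ℝ) * δ) * (1 + ‖z‖) ^ (-((d:ℝ) * δ)) := by ring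
      · refine le_trans (hφ_le _) ?_
        have hzpos : (0:ℝ) < ‖z‖ := lt_of_lt_of_le one_pos hz1
        refine (Real.log_le_log_iff (by positivity) (by positivity)).1 ?_
        simp (disch := positivity) only [Real.log_mul, Real.log_rpow, Real.log_pow,
          Real.log_inv, Real.log_div]
        have hq_le : Real.log q ≤ Real.log (1 + q) :=
          Real.log_le_log hq (by linarith)
        have hlog2 : Real.log (1 + ‖z‖) ≤ Real.log 2 + Real.log ‖z‖ := by
          rw [← Real.log_mul (by norm_num) hzpos.ne']
          exact Real.log_le_log (by linarith) (by linarith)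
        nlinarith [mul_nonneg (mul_nonneg hd0.le hδ0.le)
          (sub_nonneg.2 hlog2), hq_le]
  -- identification of the normalizing constant
  have hIρ_eq : (∫ z : EuclideanSpace ℝ (Fin d), ρ (‖z‖ ^ d)) =
      ∫ z : EuclideanSpace ℝ (Fin d), φ (‖z‖ ^ d) := by
    apply integral_congr_ae
    have h0 : (volume : Measure (EuclideanSpace ℝ (Fin d))) {0} = 0 := measure_singleton 0
    filter_upwards [measure_eq_zero_iff_ae_notMem.mp h0] with z hz
    have hz0 : z ≠ 0 := hz
    exact hρ _ (pow_pos (norm_pos_iff.2 hz0) d)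
  have hIρ0 : 0 ≤ ∫ z : EuclideanSpace ℝ (Fin d), ρ (‖z‖ ^ d) := by
    rw [hIρ_eq]
    exact integral_nonneg fun z => hφ_nonneg _ (by positivity)
  have hL : L = ENNReal.ofReal (∫ z : EuclideanSpace ℝ (Fin d), ρ (‖z‖ ^ d)) := by
    rw [hLdef, hIρ_eq]
    exact (ofReal_integral_eq_lintegral_ofReal hφint
      (ae_of_all _ fun z => hφ_nonneg _ (by positivity))).symm
  -- the per-u inner estimate
  have hstep : ∀ u ∈ Set.Ioc t 1, (∫⁻ z : EuclideanSpace ℝ (Fin d),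
      ENNReal.ofReal (ρ (β⁻¹ * t ^ γ * u ^ (1 - γ) * ‖x - z‖ ^ d) *
        ρ (β⁻¹ * s ^ γ * u ^ (1 - γ) * ‖z - y‖ ^ d))) ≤
      ENNReal.ofReal (2 * q * β ^ (δ + 1) * s ^ (-(γ * δ)) * t ^ (-γ) *
        ((‖x - y‖ / 2) ^ d) ^ (-δ) * u ^ (-((1 - γ) * (δ + 1)))) * L := by
    intro u hu
    have hu0 : 0 < u := ht0.trans hu.1
    set a : ℝ := β⁻¹ * t ^ γ * u ^ (1 - γ) with ha_def
    set b : ℝ := β⁻¹ * s ^ γ * u ^ (1 - γ) with hb_def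
    have ha : 0 < a := by rw [ha_def]; positivity
    have hb : 0 < b := by rw [hb_def]; positivity
    have hlogst : Real.log s ≤ Real.log t := Real.log_le_log hs hst
    have hterm1 : q * (a * (‖x - y‖ / 2) ^ d) ^ (-δ) * b⁻¹ ≤
        q * β ^ (δ + 1) * s ^ (-(γ * δ)) * t ^ (-γ) * ((‖x - y‖ / 2) ^ d) ^ (-δ) *
          u ^ (-((1 - γ) * (δ + 1))) := by
      rw [ha_def, hb_def]
      refine (Real.log_le_log_iff (by positivity) (by positivity)).1 ?_
      simp (disch := positivity) only [Real.log_mul, Real.log_rpow, Real.log_pow,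
        Real.log_inv, Real.log_div]
      nlinarith [mul_nonneg (mul_nonneg hγ0.le (sub_nonneg.2 hδ.le)) (sub_nonneg.2 hlogst)]
    have hterm2 : q * (b * (‖x - y‖ / 2) ^ d) ^ (-δ) * a⁻¹ ≤
        q * β ^ (δ + 1) * s ^ (-(γ * δ)) * t ^ (-γ) * ((‖x - y‖ / 2) ^ d) ^ (-δ) *
          u ^ (-((1 - γ) * (δ + 1))) := by
      rw [ha_def, hb_def]
      refine (Real.log_le_log_iff (by positivity) (by positivity)).1 ?_
      simp (disch := positivity) only [Real.log_mul, Real.log_rpow, Real.log_pow,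
        Real.log_inv, Real.log_div]
      nlinarith
    have hpt : ∀ z : EuclideanSpace ℝ (Fin d),
        φ (a * ‖x - z‖ ^ d) * φ (b * ‖z - y‖ ^ d) ≤
          q * (a * (‖x - y‖ / 2) ^ d) ^ (-δ) * φ (b * ‖z - y‖ ^ d) +
          q * (b * (‖x - y‖ / 2) ^ d) ^ (-δ) * φ (a * ‖x - z‖ ^ d) := by
      intro z
      have htri : ‖x - y‖ ≤ ‖x - z‖ + ‖z - y‖ := by
        have h := dist_triangle x z y
        simpa [dist_eq_norm] using h
      rcases le_or_gt (‖x - y‖ / 2) ‖x - z‖ with hA | hA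
      · have h1 : φ (a * ‖x - z‖ ^ d) ≤ q * (a * (‖x - y‖ / 2) ^ d) ^ (-δ) := by
          refine le_trans (hφ_le _) ?_
          have hle : a * (‖x - y‖ / 2) ^ d ≤ a * ‖x - z‖ ^ d := by
            gcongr
          exact mul_le_mul_of_nonneg_left
            (Real.rpow_le_rpow_of_nonpos (by positivity) hle (by linarith)) hq.le
        have h2 : 0 ≤ φ (b * ‖z - y‖ ^ d) := hφ_nonneg _ (by positivity)
        refine le_trans (mul_le_mul_of_nonneg_right h1 h2) (le_add_of_nonneg_right ?_)
        exact mul_nonneg (mul_nonneg hq.le (Real.rpow_nonneg (by positivity) _))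
          (hφ_nonneg _ (by positivity))
      · have hB : ‖x - y‖ / 2 ≤ ‖z - y‖ := by linarith
        have h1 : φ (b * ‖z - y‖ ^ d) ≤ q * (b * (‖x - y‖ / 2) ^ d) ^ (-δ) := by
          refine le_trans (hφ_le _) ?_
          have hle : b * (‖x - y‖ / 2) ^ d ≤ b * ‖z - y‖ ^ d := by
            gcongr
          exact mul_le_mul_of_nonneg_left
            (Real.rpow_le_rpow_of_nonpos (by positivity) hle (by linarith)) hq.le
        have h2 : 0 ≤ φ (a * ‖x - z‖ ^ d) := hφ_nonneg _ (by positivity)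
        calc φ (a * ‖x - z‖ ^ d) * φ (b * ‖z - y‖ ^ d)
            ≤ φ (a * ‖x - z‖ ^ d) * (q * (b * (‖x - y‖ / 2) ^ d) ^ (-δ)) :=
              mul_le_mul_of_nonneg_left h1 h2
          _ = q * (b * (‖x - y‖ / 2) ^ d) ^ (-δ) * φ (a * ‖x - z‖ ^ d) := by ring
          _ ≤ _ := le_add_of_nonneg_left (mul_nonneg
              (mul_nonneg hq.le (Real.rpow_nonneg (by positivity) _))
              (hφ_nonneg _ (by positivity)))
    have hscale_b : (∫⁻ z : EuclideanSpace ℝ (Fin d),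
        ENNReal.ofReal (φ (b * ‖z - y‖ ^ d))) = ENNReal.ofReal b⁻¹ * L := by
      simpa using aux_scale hd (fun v => ENNReal.ofReal (φ v))
        (ENNReal.measurable_ofReal.comp hφm) hb y
    have hscale_a : (∫⁻ z : EuclideanSpace ℝ (Fin d),
        ENNReal.ofReal (φ (a * ‖x - z‖ ^ d))) = ENNReal.ofReal a⁻¹ * L := by
      have h1 : ∀ z : EuclideanSpace ℝ (Fin d), ‖x - z‖ = ‖z - x‖ := fun z => norm_sub_rev x z
      simp_rw [h1]
      simpa using aux_scale hd (fun v => ENNReal.ofReal (φ v))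
        (ENNReal.measurable_ofReal.comp hφm) ha x
    have hcongr : (fun z : EuclideanSpace ℝ (Fin d) =>
        ENNReal.ofReal (ρ (a * ‖x - z‖ ^ d) * ρ (b * ‖z - y‖ ^ d)))
        =ᵐ[volume] fun z : EuclideanSpace ℝ (Fin d) =>
        ENNReal.ofReal (φ (a * ‖x - z‖ ^ d) * φ (b * ‖z - y‖ ^ d)) := by
      have hxy0 : (volume : Measure (EuclideanSpace ℝ (Fin d))) {x, y} = 0 :=
        Set.Finite.measure_zero (Set.toFinite _) _
      filter_upwards [measure_eq_zero_iff_ae_notMem.mp hxy0] with z hz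
      simp only [Set.mem_insert_iff, Set.mem_singleton_iff, not_or] at hz
      have hx1 : 0 < ‖x - z‖ := norm_pos_iff.2 (sub_ne_zero_of_ne fun h => hz.1 h.symm)
      have hy1 : 0 < ‖z - y‖ := norm_pos_iff.2 (sub_ne_zero_of_ne hz.2)
      rw [hρ _ (by positivity), hρ _ (by positivity)]
    have hmz1 : Measurable fun z : EuclideanSpace ℝ (Fin d) =>
        ENNReal.ofReal (φ (b * ‖z - y‖ ^ d)) :=
      ENNReal.measurable_ofReal.comp (hφm.comp
        ((((measurable_id.sub_const y).norm).pow_const d).const_mul b))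
    have hmz2 : Measurable fun z : EuclideanSpace ℝ (Fin d) =>
        ENNReal.ofReal (φ (a * ‖x - z‖ ^ d)) :=
      ENNReal.measurable_ofReal.comp (hφm.comp
        ((((measurable_const.sub measurable_id).norm).pow_const d).const_mul a))
    calc (∫⁻ z : EuclideanSpace ℝ (Fin d),
        ENNReal.ofReal (ρ (a * ‖x - z‖ ^ d) * ρ (b * ‖z - y‖ ^ d)))
        = ∫⁻ z : EuclideanSpace ℝ (Fin d),
            ENNReal.ofReal (φ (a * ‖x - z‖ ^ d) * φ (b * ‖z - y‖ ^ d)) :=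
          lintegral_congr_ae hcongr
      _ ≤ ∫⁻ z : EuclideanSpace ℝ (Fin d),
            (ENNReal.ofReal (q * (a * (‖x - y‖ / 2) ^ d) ^ (-δ)) *
              ENNReal.ofReal (φ (b * ‖z - y‖ ^ d)) +
             ENNReal.ofReal (q * (b * (‖x - y‖ / 2) ^ d) ^ (-δ)) *
              ENNReal.ofReal (φ (a * ‖x - z‖ ^ d))) := by
          refine lintegral_mono fun z => ?_
          refine le_trans (ENNReal.ofReal_le_ofReal (hpt z)) ?_
          refine le_trans ENNReal.ofReal_add_le ?_
          rw [ENNReal.ofReal_mul (show (0:ℝ) ≤ q * (a * (‖x - y‖ / 2) ^ d) ^ (-δ) by positivity),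
            ENNReal.ofReal_mul (show (0:ℝ) ≤ q * (b * (‖x - y‖ / 2) ^ d) ^ (-δ) by positivity)]
      _ = ENNReal.ofReal (q * (a * (‖x - y‖ / 2) ^ d) ^ (-δ)) *
            (∫⁻ z : EuclideanSpace ℝ (Fin d), ENNReal.ofReal (φ (b * ‖z - y‖ ^ d))) +
          ENNReal.ofReal (q * (b * (‖x - y‖ / 2) ^ d) ^ (-δ)) *
            (∫⁻ z : EuclideanSpace ℝ (Fin d), ENNReal.ofReal (φ (a * ‖x - z‖ ^ d))) := by
          rw [lintegral_add_left (hmz1.const_mul _), lintegral_const_mul _ hmz1,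
            lintegral_const_mul _ hmz2]
      _ = ENNReal.ofReal (q * (a * (‖x - y‖ / 2) ^ d) ^ (-δ) * b⁻¹ +
            q * (b * (‖x - y‖ / 2) ^ d) ^ (-δ) * a⁻¹) * L := by
          rw [hscale_b, hscale_a,
            ENNReal.ofReal_add (show (0:ℝ) ≤ q * (a * (‖x - y‖ / 2) ^ d) ^ (-δ) * b⁻¹ by positivity)
              (show (0:ℝ) ≤ q * (b * (‖x - y‖ / 2) ^ d) ^ (-δ) * a⁻¹ by positivity),
            ENNReal.ofReal_mul (show (0:ℝ) ≤ q * (a * (‖x - y‖ / 2) ^ d) ^ (-δ) by positivity),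
            ENNReal.ofReal_mul (show (0:ℝ) ≤ q * (b * (‖x - y‖ / 2) ^ d) ^ (-δ) by positivity),
            add_mul]
          simp only [mul_assoc]
      _ ≤ _ := by
          refine mul_le_mul_left (ENNReal.ofReal_le_ofReal ?_) L
          linarith [hterm1, hterm2]
  -- measurability of the outer upper bound
  have hmK0 : Measurable fun u : ℝ => ENNReal.ofReal
      (2 * q * β ^ (δ + 1) * s ^ (-(γ * δ)) * t ^ (-γ) *
        ((‖x - y‖ / 2) ^ d) ^ (-δ) * u ^ (-((1 - γ) * (δ + 1)))) :=
    ENNReal.measurable_ofReal.comp ((measurable_id.pow_const _).const_mul _)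
  -- value of the outer integral
  have hcont : IntegrableOn (fun u : ℝ =>
      2 * q * β ^ (δ + 1) * s ^ (-(γ * δ)) * t ^ (-γ) * ((‖x - y‖ / 2) ^ d) ^ (-δ) *
        u ^ (-((1 - γ) * (δ + 1)))) (Set.Ioc t 1) := by
    apply (ContinuousOn.integrableOn_Icc ?_).mono_set Set.Ioc_subset_Icc_self
    apply ContinuousOn.mul continuousOn_const
    apply ContinuousOn.rpow_const continuousOn_id
    intro v hv
    exact Or.inl (ne_of_gt (lt_of_lt_of_le ht0 hv.1))
  have heq : (∫⁻ u in Set.Ioc t 1, ENNReal.ofReal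
      (2 * q * β ^ (δ + 1) * s ^ (-(γ * δ)) * t ^ (-γ) * ((‖x - y‖ / 2) ^ d) ^ (-δ) *
        u ^ (-((1 - γ) * (δ + 1))))) =
      ENNReal.ofReal (∫ u in Set.Ioc t 1,
        2 * q * β ^ (δ + 1) * s ^ (-(γ * δ)) * t ^ (-γ) * ((‖x - y‖ / 2) ^ d) ^ (-δ) *
          u ^ (-((1 - γ) * (δ + 1)))) := by
    refine (ofReal_integral_eq_lintegral_ofReal hcont ?_).symm
    refine (ae_restrict_iff' measurableSet_Ioc).2 (ae_of_all _ fun u hu => ?_)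
    have hu0 : 0 < u := ht0.trans hu.1
    positivity
  have hval : (∫ u in Set.Ioc t 1,
      2 * q * β ^ (δ + 1) * s ^ (-(γ * δ)) * t ^ (-γ) * ((‖x - y‖ / 2) ^ d) ^ (-δ) *
        u ^ (-((1 - γ) * (δ + 1)))) =
      2 * q * β ^ (δ + 1) * s ^ (-(γ * δ)) * t ^ (-γ) * ((‖x - y‖ / 2) ^ d) ^ (-δ) *
        ((t ^ (1 - (1 - γ) * (δ + 1)) - 1) / ((1 - γ) * (δ + 1) - 1)) := by
    rw [integral_const_mul]
    congr 1
    rw [← intervalIntegral.integral_of_le ht]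
    rw [integral_rpow]
    · rw [Real.one_rpow, show -((1 - γ) * (δ + 1)) + 1 = 1 - (1 - γ) * (δ + 1) by ring]
      have h1 : (1:ℝ) - (1 - γ) * (δ + 1) ≠ 0 := by linarith
      have h2 : (1 - γ) * (δ + 1) - 1 ≠ 0 := by linarith
      field_simp
      ring
    · refine Or.inr ⟨by intro h; linarith, ?_⟩
      rw [Set.uIcc_of_le ht]
      rintro ⟨h0, -⟩
      exact absurd h0 (not_le.2 ht0)
  -- nonnegativity of the bound
  have h1t : (1:ℝ) ≤ t ^ (1 - (1 - γ) * (δ + 1)) := by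
    calc (1:ℝ) = t ^ (0:ℝ) := (Real.rpow_zero t).symm
      _ ≤ t ^ (1 - (1 - γ) * (δ + 1)) :=
        Real.rpow_le_rpow_of_exponent_ge ht0 ht (by linarith)
  have hJnum : (0:ℝ) ≤ 2 * q * β ^ (δ + 1) * s ^ (-(γ * δ)) * t ^ (-γ) *
      ((‖x - y‖ / 2) ^ d) ^ (-δ) *
      ((t ^ (1 - (1 - γ) * (δ + 1)) - 1) / ((1 - γ) * (δ + 1) - 1)) := by
    have h2 : (0:ℝ) ≤ (t ^ (1 - (1 - γ) * (δ + 1)) - 1) / ((1 - γ) * (δ + 1) - 1) :=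
      div_nonneg (by linarith) (by linarith)
    positivity
  -- the key real comparison
  have hKey : 2 * q * β ^ (δ + 1) * s ^ (-(γ * δ)) * t ^ (-γ) * ((‖x - y‖ / 2) ^ d) ^ (-δ) *
      ((t ^ (1 - (1 - γ) * (δ + 1)) - 1) / ((1 - γ) * (δ + 1) - 1)) ≤
      β * 2 ^ ((d : ℝ) * δ + 1) / (δ * (1 - γ) - γ) * q *
        (β⁻¹ * s ^ γ * t ^ (1 - γ) * ‖x - y‖ ^ d) ^ (-δ) := by
    have hPm : (0:ℝ) < (1 - γ) * (δ + 1) - 1 := by linarith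
    have hDel : δ * (1 - γ) - γ = (1 - γ) * (δ + 1) - 1 := by ring
    rw [hDel, div_mul_eq_mul_div, div_mul_eq_mul_div, ← mul_div_assoc]
    rw [div_le_div_iff₀ hPm hPm]
    have hmain : 2 * q * β ^ (δ + 1) * s ^ (-(γ * δ)) * t ^ (-γ) *
        ((‖x - y‖ / 2) ^ d) ^ (-δ) * t ^ (1 - (1 - γ) * (δ + 1)) ≤
        β * 2 ^ ((d : ℝ) * δ + 1) * q * (β⁻¹ * s ^ γ * t ^ (1 - γ) * ‖x - y‖ ^ d) ^ (-δ) := by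
      refine (Real.log_le_log_iff (by positivity) (by positivity)).1 ?_
      simp (disch := positivity) only [Real.log_mul, Real.log_rpow, Real.log_pow,
        Real.log_inv, Real.log_div]
      ring_nf
      nlinarith [Real.log_pos (show (1:ℝ) < 2 by norm_num)]
    have hsub : 2 * q * β ^ (δ + 1) * s ^ (-(γ * δ)) * t ^ (-γ) *
        ((‖x - y‖ / 2) ^ d) ^ (-δ) * (t ^ (1 - (1 - γ) * (δ + 1)) - 1) ≤
        2 * q * β ^ (δ + 1) * s ^ (-(γ * δ)) * t ^ (-γ) *
        ((‖x - y‖ / 2) ^ d) ^ (-δ) * t ^ (1 - (1 - γ) * (δ + 1)) := by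
      have h0 : (0:ℝ) ≤ 2 * q * β ^ (δ + 1) * s ^ (-(γ * δ)) * t ^ (-γ) *
          ((‖x - y‖ / 2) ^ d) ^ (-δ) := by positivity
      nlinarith
    nlinarith [mul_le_mul_of_nonneg_right hmain hPm.le, hsub,
      mul_le_mul_of_nonneg_right hsub hPm.le]
  -- final assembly
  calc ∫⁻ u in Set.Ioc t 1, ∫⁻ z : EuclideanSpace ℝ (Fin d),
        ENNReal.ofReal (ρ (β⁻¹ * t ^ γ * u ^ (1 - γ) * ‖x - z‖ ^ d) *
          ρ (β⁻¹ * s ^ γ * u ^ (1 - γ) * ‖z - y‖ ^ d))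
      ≤ ∫⁻ u in Set.Ioc t 1, ENNReal.ofReal
          (2 * q * β ^ (δ + 1) * s ^ (-(γ * δ)) * t ^ (-γ) *
            ((‖x - y‖ / 2) ^ d) ^ (-δ) * u ^ (-((1 - γ) * (δ + 1)))) * L :=
        setLIntegral_mono (hmK0.mul_const L) hstep
    _ = (∫⁻ u in Set.Ioc t 1, ENNReal.ofReal
          (2 * q * β ^ (δ + 1) * s ^ (-(γ * δ)) * t ^ (-γ) *
            ((‖x - y‖ / 2) ^ d) ^ (-δ) * u ^ (-((1 - γ) * (δ + 1))))) * L :=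
        lintegral_mul_const L hmK0
    _ = ENNReal.ofReal (2 * q * β ^ (δ + 1) * s ^ (-(γ * δ)) * t ^ (-γ) *
          ((‖x - y‖ / 2) ^ d) ^ (-δ) *
          ((t ^ (1 - (1 - γ) * (δ + 1)) - 1) / ((1 - γ) * (δ + 1) - 1))) *
        ENNReal.ofReal (∫ z : EuclideanSpace ℝ (Fin d), ρ (‖z‖ ^ d)) := by
        rw [heq, hval, hL]
    _ ≤ ENNReal.ofReal ((∫ z : EuclideanSpace ℝ (Fin d), ρ (‖z‖ ^ d)) *
        (β * 2 ^ ((d : ℝ) * δ + 1) / (δ * (1 - γ) - γ)) * q *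
        (β⁻¹ * s ^ γ * t ^ (1 - γ) * ‖x - y‖ ^ d) ^ (-δ)) := by
        rw [← ENNReal.ofReal_mul hJnum]
        refine ENNReal.ofReal_le_ofReal ?_
        calc 2 * q * β ^ (δ + 1) * s ^ (-(γ * δ)) * t ^ (-γ) *
              ((‖x - y‖ / 2) ^ d) ^ (-δ) *
              ((t ^ (1 - (1 - γ) * (δ + 1)) - 1) / ((1 - γ) * (δ + 1) - 1)) *
              (∫ z : EuclideanSpace ℝ (Fin d), ρ (‖z‖ ^ d))
            = (∫ z : EuclideanSpace ℝ (Fin d), ρ (‖z‖ ^ d)) *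
              (2 * q * β ^ (δ + 1) * s ^ (-(γ * δ)) * t ^ (-γ) *
                ((‖x - y‖ / 2) ^ d) ^ (-δ) *
                ((t ^ (1 - (1 - γ) * (δ + 1)) - 1) / ((1 - γ) * (δ + 1) - 1))) := by ring
          _ ≤ (∫ z : EuclideanSpace ℝ (Fin d), ρ (‖z‖ ^ d)) *
              (β * 2 ^ ((d : ℝ) * δ + 1) / (δ * (1 - γ) - γ) * q *
                (β⁻¹ * s ^ γ * t ^ (1 - γ) * ‖x - y‖ ^ d) ^ (-δ)) :=
              mul_le_mul_of_nonneg_left hKey hIρ0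
          _ = (∫ z : EuclideanSpace ℝ (Fin d), ρ (‖z‖ ^ d)) *
              (β * 2 ^ ((d : ℝ) * δ + 1) / (δ * (1 - γ) - γ)) * q *
              (β⁻¹ * s ^ γ * t ^ (1 - γ) * ‖x - y‖ ^ d) ^ (-δ) := by ring
end

section
/- Let 0 < γ < 1/2 and let n ≥ 1 be an integer. Then the iterated integral ∫_0^1 dt_0 ∫_0^1 dt_1 ⋯ ∫_0^1 dt_n of the product ∏_{j=1}^n (t_{j−1} ∧ t_j)^(−γ) · (t_{j−1} ∨ t_j)^(γ−1) is at most (4/(1−2γ))^n. -/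
open MeasureTheory

section PathBoundAux
open Real Set
open scoped ENNReal

open MeasureTheory Real Set
open scoped ENNReal

lemma lint_Ioo_left {r : ℝ} (hr : -1 < r) {s : ℝ} (hs : 0 < s) :
    ∫⁻ t in Ioo (0:ℝ) s, ENNReal.ofReal (t ^ r) = ENNReal.ofReal (s ^ (r+1) / (r+1)) := by
  rw [← ofReal_integral_eq_lintegral_ofReal]
  · rw [← integral_Ioc_eq_integral_Ioo, ← intervalIntegral.integral_of_le hs.le,
      integral_rpow (Or.inl hr), Real.zero_rpow (by linarith), sub_zero]
  · have h := intervalIntegral.intervalIntegrable_rpow' (a := 0) (b := s) hr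
    rw [intervalIntegrable_iff_integrableOn_Ioc_of_le hs.le] at h
    exact h.mono_set Ioo_subset_Ioc_self
  · exact (ae_restrict_mem measurableSet_Ioo).mono fun t ht => rpow_nonneg ht.1.le _

lemma lint_Ioo_right {r : ℝ} (hr : r ≠ -1) {s : ℝ} (hs : 0 < s) (hs1 : s ≤ 1) :
    ∫⁻ t in Ioo s 1, ENNReal.ofReal (t ^ r) = ENNReal.ofReal ((1 - s ^ (r+1)) / (r+1)) := by
  have hmem : (0:ℝ) ∉ Set.uIcc s 1 := by
    rw [uIcc_of_le hs1]
    rintro ⟨h0, -⟩; linarith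
  rw [← ofReal_integral_eq_lintegral_ofReal]
  · rw [← integral_Ioc_eq_integral_Ioo, ← intervalIntegral.integral_of_le hs1,
      integral_rpow (Or.inr ⟨hr, hmem⟩), Real.one_rpow]
  · have h := intervalIntegral.intervalIntegrable_rpow (μ := volume) (a := s) (b := 1) (r := r) (Or.inr hmem)
    rw [intervalIntegrable_iff_integrableOn_Ioc_of_le hs1] at h
    exact h.mono_set Ioo_subset_Ioc_self
  · exact (ae_restrict_mem measurableSet_Ioo).mono fun t ht =>
      rpow_nonneg (le_trans hs.le ht.1.le) _

lemma lint_split (f : ℝ → ENNReal) {s : ℝ} (hs : s ∈ Ioo (0:ℝ) 1) :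
    ∫⁻ t in Ioo (0:ℝ) 1, f t = (∫⁻ t in Ioo (0:ℝ) s, f t) + ∫⁻ t in Ioo s 1, f t := by
  have hset : Ioo (0:ℝ) 1 = Ioo 0 s ∪ Ico s 1 := by
    ext t
    constructor
    · rintro ⟨h0, h1⟩
      rcases lt_or_ge t s with h | h
      · exact Or.inl ⟨h0, h⟩
      · exact Or.inr ⟨h, h1⟩
    · rintro (⟨h0, h1⟩ | ⟨h0, h1⟩)
      · exact ⟨h0, h1.trans hs.2⟩
      · exact ⟨hs.1.trans_le h0, h1⟩
  rw [hset, lintegral_union measurableSet_Ico (by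
    apply Set.disjoint_left.2
    rintro t ⟨-, h1⟩ ⟨h2, -⟩; linarith)]
  congr 1
  apply setLIntegral_congr
  exact (Ioo_ae_eq_Ico).symm

lemma real_base {γ s : ℝ} (hγ0 : 0 < γ) (hγ : γ < 1/2) (hs : 0 < s) (hs1 : s < 1) :
    s ^ (γ-1) * (s ^ (-γ+1) / (-γ+1)) + s ^ (-γ) * ((1 - s ^ (γ-1+1)) / (γ-1+1))
      ≤ 2 * s ^ (-(1:ℝ)/2) := by
  set X := s ^ (-(1:ℝ)/2) with hXdef
  have e1 : s ^ (γ-1) * s ^ (-γ+1) = 1 := by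
    rw [← rpow_add hs]; norm_num
  have e2 : s ^ (-γ) * s ^ (γ-1+1) = 1 := by
    rw [← rpow_add hs]; norm_num
  have hX : (1:ℝ) ≤ X := one_le_rpow_of_pos_of_le_one_of_nonpos hs hs1.le (by norm_num)
  have hAM : s ^ (-γ) ≤ (1 - 2*γ) + 2*γ * X := by
    have h := Real.geom_mean_le_arith_mean2_weighted (by linarith : (0:ℝ) ≤ 1 - 2*γ)
      (by linarith : (0:ℝ) ≤ 2*γ) zero_le_one (rpow_nonneg hs.le (-(1:ℝ)/2)) (by ring)
    rw [one_rpow, one_mul, mul_one, ← Real.rpow_mul hs.le] at h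
    calc s ^ (-γ) = s ^ (-(1:ℝ)/2 * (2*γ)) := by congr 1; ring
    _ ≤ (1 - 2*γ) + 2*γ * X := h
  have key1 : s ^ (γ-1) * (s ^ (-γ+1) / (-γ+1)) = 1/(1-γ) := by
    rw [← mul_div_assoc, e1]; congr 1; ring
  have key2 : s ^ (-γ) * ((1 - s ^ (γ-1+1)) / (γ-1+1)) = (s ^ (-γ) - 1)/γ := by
    rw [← mul_div_assoc, mul_sub, mul_one, e2]; congr 1; ring
  rw [key1, key2]
  have h1 : 1/(1-γ) ≤ 2 := by rw [div_le_iff₀ (by linarith)]; linarith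
  have h2 : (s ^ (-γ) - 1)/γ ≤ 2*X - 2 := by
    rw [div_le_iff₀ hγ0]; nlinarith
  linarith

lemma real_step {γ s : ℝ} (hγ0 : 0 < γ) (hγ : γ < 1/2) (hs : 0 < s) (hs1 : s < 1) :
    s ^ (γ-1) * (s ^ (-γ + -(1:ℝ)/2 + 1) / (-γ + -(1:ℝ)/2 + 1))
      + s ^ (-γ) * ((1 - s ^ (γ-1 + -(1:ℝ)/2 + 1)) / (γ-1 + -(1:ℝ)/2 + 1))
      ≤ (4/(1-2*γ)) * s ^ (-(1:ℝ)/2) := by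
  set X := s ^ (-(1:ℝ)/2) with hXdef
  have hd : (0:ℝ) < 1/2 - γ := by linarith
  have ha : 0 ≤ s ^ (-γ) := rpow_nonneg hs.le _
  have e1 : s ^ (γ-1) * s ^ (-γ + -(1:ℝ)/2 + 1) = X := by
    rw [← rpow_add hs]; congr 1; ring
  have e2 : s ^ (-γ) * s ^ (γ-1 + -(1:ℝ)/2 + 1) = X := by
    rw [← rpow_add hs]; congr 1; ring
  have key1 : s ^ (γ-1) * (s ^ (-γ + -(1:ℝ)/2 + 1) / (-γ + -(1:ℝ)/2 + 1)) = X / (1/2 - γ) := by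
    rw [← mul_div_assoc, e1]; congr 1; ring
  have key2 : s ^ (-γ) * ((1 - s ^ (γ-1 + -(1:ℝ)/2 + 1)) / (γ-1 + -(1:ℝ)/2 + 1))
      = (X - s ^ (-γ)) / (1/2 - γ) := by
    rw [← mul_div_assoc, mul_sub, mul_one, e2]
    rw [div_eq_div_iff (by intro h; exact absurd h (by linarith)) (by positivity)]
    ring
  rw [key1, key2]
  have hfinal : X / (1/2 - γ) + (X - s ^ (-γ)) / (1/2 - γ) ≤ (2*X) / (1/2 - γ) := by
    rw [← add_div, div_le_div_iff₀ hd hd]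
    nlinarith
  refine hfinal.trans (le_of_eq ?_)
  rw [div_eq_iff (by linarith : (1:ℝ)/2 - γ ≠ 0), div_mul_eq_mul_div,
    div_mul_eq_mul_div, eq_comm, div_eq_iff (by linarith : (1:ℝ) - 2*γ ≠ 0)]
  ring

lemma ker_int {γ w : ℝ} (hγ0 : 0 < γ) (h1 : -1 < -γ + w)
    (h2 : γ - 1 + w ≠ -1) {s : ℝ} (hs : s ∈ Ioo (0:ℝ) 1) :
    ∫⁻ t in Ioo (0:ℝ) 1, ENNReal.ofReal (min s t ^ (-γ) * max s t ^ (γ-1) * t ^ w)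
      = ENNReal.ofReal (s ^ (γ-1) * (s ^ (-γ+w+1) / (-γ+w+1)))
        + ENNReal.ofReal (s ^ (-γ) * ((1 - s ^ (γ-1+w+1)) / (γ-1+w+1))) := by
  rw [lint_split _ hs]
  congr 1
  · calc ∫⁻ t in Ioo (0:ℝ) s, ENNReal.ofReal (min s t ^ (-γ) * max s t ^ (γ-1) * t ^ w)
        = ∫⁻ t in Ioo (0:ℝ) s, ENNReal.ofReal (s ^ (γ-1)) * ENNReal.ofReal (t ^ (-γ+w)) := by
          apply setLIntegral_congr_fun measurableSet_Ioo
          intro t ht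
          dsimp only
          rw [min_eq_right ht.2.le, max_eq_left ht.2.le,
            ← ENNReal.ofReal_mul (rpow_nonneg hs.1.le _)]
          congr 1
          rw [rpow_add ht.1]; ring
      _ = ENNReal.ofReal (s ^ (γ-1)) * ENNReal.ofReal (s ^ (-γ+w+1) / (-γ+w+1)) := by
          rw [lintegral_const_mul' _ _ ENNReal.ofReal_ne_top, lint_Ioo_left h1 hs.1]
      _ = ENNReal.ofReal (s ^ (γ-1) * (s ^ (-γ+w+1) / (-γ+w+1))) := by
          rw [← ENNReal.ofReal_mul (rpow_nonneg hs.1.le _)]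
  · calc ∫⁻ t in Ioo s 1, ENNReal.ofReal (min s t ^ (-γ) * max s t ^ (γ-1) * t ^ w)
        = ∫⁻ t in Ioo s 1, ENNReal.ofReal (s ^ (-γ)) * ENNReal.ofReal (t ^ (γ-1+w)) := by
          apply setLIntegral_congr_fun measurableSet_Ioo
          intro t ht
          dsimp only
          rw [min_eq_left ht.1.le, max_eq_right ht.1.le,
            ← ENNReal.ofReal_mul (rpow_nonneg hs.1.le _)]
          congr 1
          rw [rpow_add (hs.1.trans ht.1)]; ring
      _ = ENNReal.ofReal (s ^ (-γ)) * ENNReal.ofReal ((1 - s ^ (γ-1+w+1)) / (γ-1+w+1)) := by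
          rw [lintegral_const_mul' _ _ ENNReal.ofReal_ne_top, lint_Ioo_right h2 hs.1 hs.2.le]
      _ = ENNReal.ofReal (s ^ (-γ) * ((1 - s ^ (γ-1+w+1)) / (γ-1+w+1))) := by
          rw [← ENNReal.ofReal_mul (rpow_nonneg hs.1.le _)]

lemma ker_base {γ : ℝ} (hγ0 : 0 < γ) (hγ : γ < 1/2) {s : ℝ} (hs : s ∈ Ioo (0:ℝ) 1) :
    ∫⁻ t in Ioo (0:ℝ) 1, ENNReal.ofReal (min s t ^ (-γ) * max s t ^ (γ-1))
      ≤ ENNReal.ofReal (2 * s ^ (-(1:ℝ)/2)) := by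
  have h := ker_int (w := 0) hγ0 (by linarith) (by intro h; apply hγ0.ne'; linarith) hs
  simp only [Real.rpow_zero, mul_one] at h
  rw [h, show -γ + (0:ℝ) + 1 = -γ + 1 by ring, show γ - 1 + (0:ℝ) + 1 = γ - 1 + 1 by ring,
    ← ENNReal.ofReal_add]
  · exact ENNReal.ofReal_le_ofReal (real_base hγ0 hγ hs.1 hs.2)
  · exact mul_nonneg (rpow_nonneg hs.1.le _)
      (div_nonneg (rpow_nonneg hs.1.le _) (by linarith))
  · refine mul_nonneg (rpow_nonneg hs.1.le _) (div_nonneg ?_ (by linarith))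
    have : s ^ (γ - 1 + 1) ≤ 1 := by
      rw [show γ - 1 + 1 = γ by ring]
      exact rpow_le_one hs.1.le hs.2.le hγ0.le
    linarith

lemma ker_step {γ : ℝ} (hγ0 : 0 < γ) (hγ : γ < 1/2) {s : ℝ} (hs : s ∈ Ioo (0:ℝ) 1) :
    ∫⁻ t in Ioo (0:ℝ) 1, ENNReal.ofReal (min s t ^ (-γ) * max s t ^ (γ-1) * t ^ (-(1:ℝ)/2))
      ≤ ENNReal.ofReal ((4/(1-2*γ)) * s ^ (-(1:ℝ)/2)) := by
  have h := ker_int (w := -(1:ℝ)/2) hγ0 (by linarith) (by intro h; apply (ne_of_lt hγ); linarith) hs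
  rw [h, ← ENNReal.ofReal_add]
  · exact ENNReal.ofReal_le_ofReal (real_step hγ0 hγ hs.1 hs.2)
  · refine mul_nonneg (rpow_nonneg hs.1.le _) (div_nonneg (rpow_nonneg hs.1.le _) (by linarith))
  · refine mul_nonneg (rpow_nonneg hs.1.le _) (div_nonneg_of_nonpos ?_ (by linarith))
    have : (1:ℝ) ≤ s ^ (γ - 1 + -(1:ℝ)/2 + 1) :=
      one_le_rpow_of_pos_of_le_one_of_nonpos hs.1 hs.2.le (by linarith)
    linarith

lemma pi_restrict (m : ℕ) :
    (volume : Measure (Fin m → ℝ)).restrict (Set.pi Set.univ fun _ => Ioo (0:ℝ) 1)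
      = Measure.pi fun _ : Fin m => volume.restrict (Ioo (0:ℝ) 1) := by
  refine (Measure.pi_eq (μ := fun _ : Fin m => volume.restrict (Ioo (0:ℝ) 1)) fun s hs => ?_).symm
  rw [Measure.restrict_apply (MeasurableSet.univ_pi hs), ← Set.pi_inter_distrib, volume_pi,
    Measure.pi_pi]
  exact Finset.prod_congr rfl fun i _ => (Measure.restrict_apply (hs i)).symm

lemma ae_pi_mem (m : ℕ) :
    ∀ᵐ y ∂(Measure.pi fun _ : Fin m => volume.restrict (Ioo (0:ℝ) 1)),
      ∀ i, y i ∈ Ioo (0:ℝ) 1 := by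
  rw [← pi_restrict m]
  filter_upwards [ae_restrict_mem (MeasurableSet.univ_pi fun _ => measurableSet_Ioo)] with y hy i
  exact hy i trivial

lemma meas_aux {γ : ℝ} (m k : ℕ) (w : ℝ → ℝ) (hw : Measurable w) (i : Fin m)
    (a b : Fin k → Fin m) :
    Measurable fun y : Fin m → ℝ => ENNReal.ofReal ((∏ j : Fin k,
      min (y (a j)) (y (b j)) ^ (-γ) * max (y (a j)) (y (b j)) ^ (γ-1)) * w (y i)) := by
  have : ∀ u v : Fin m, Measurable fun y : Fin m → ℝ =>
      min (y u) (y v) ^ (-γ) * max (y u) (y v) ^ (γ-1) := by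
    intro u v
    fun_prop
  apply ENNReal.measurable_ofReal.comp
  exact (Finset.measurable_prod _ fun j _ => this (a j) (b j)).mul
    (hw.comp (measurable_pi_apply i))

lemma peel {γ : ℝ} (m : ℕ) (w : ℝ → ℝ) (hw : Measurable w) (b : ℝ) (hb : 0 ≤ b)
    (hker : ∀ c ∈ Ioo (0:ℝ) 1,
      ∫⁻ x in Ioo (0:ℝ) 1, ENNReal.ofReal (min c x ^ (-γ) * max c x ^ (γ-1) * w x)
        ≤ ENNReal.ofReal (b * c ^ (-(1:ℝ)/2))) :
    (∫⁻ y, ENNReal.ofReal ((∏ j : Fin (m+1),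
          min (y j.castSucc) (y j.succ) ^ (-γ) * max (y j.castSucc) (y j.succ) ^ (γ-1))
          * w (y (Fin.last (m+1)))) ∂(Measure.pi fun _ : Fin (m+2) => volume.restrict (Ioo (0:ℝ) 1)))
      ≤ ENNReal.ofReal b *
        ∫⁻ y, ENNReal.ofReal ((∏ j : Fin m,
            min (y j.castSucc) (y j.succ) ^ (-γ) * max (y j.castSucc) (y j.succ) ^ (γ-1))
            * y (Fin.last m) ^ (-(1:ℝ)/2)) ∂(Measure.pi fun _ : Fin (m+1) => volume.restrict (Ioo (0:ℝ) 1)) := by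
  set μ : Measure ℝ := volume.restrict (Ioo (0:ℝ) 1) with hμ
  set F : (Fin (m+2) → ℝ) → ℝ≥0∞ := fun y => ENNReal.ofReal ((∏ j : Fin (m+1),
    min (y j.castSucc) (y j.succ) ^ (-γ) * max (y j.castSucc) (y j.succ) ^ (γ-1))
    * w (y (Fin.last (m+1)))) with hF
  have hFm : Measurable F := meas_aux (m+2) (m+1) w hw (Fin.last (m+1)) Fin.castSucc Fin.succ
  set e := MeasurableEquiv.piFinSuccAbove (fun _ : Fin (m+2) => ℝ) (Fin.last (m+1)) with he
  have hmp := measurePreserving_piFinSuccAbove (fun _ : Fin (m+2) => μ) (Fin.last (m+1))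
  have key : (∫⁻ y, F y ∂(Measure.pi fun _ : Fin (m+2) => μ))
      = ∫⁻ z, F (e.symm z) ∂(μ.prod (Measure.pi fun _ : Fin (m+1) => μ)) :=
    ((hmp.symm e).lintegral_comp_emb e.symm.measurableEmbedding F).symm
  rw [key, lintegral_prod_symm (fun z => F (e.symm z)) ((hFm.comp e.symm.measurable).aemeasurable)]
  have hsnoc : ∀ (x : ℝ) (y : Fin (m+1) → ℝ), F (e.symm (x, y)) =
      ENNReal.ofReal ((∏ j : Fin m,
        min (y j.castSucc) (y j.succ) ^ (-γ) * max (y j.castSucc) (y j.succ) ^ (γ-1))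
        * (min (y (Fin.last m)) x ^ (-γ) * max (y (Fin.last m)) x ^ (γ-1) * w x)) := by
    intro x y
    have hes : e.symm (x, y) = Fin.snoc y x := by
      simp [he, MeasurableEquiv.piFinSuccAbove, Fin.snocEquiv]
    rw [hF]
    simp only [hes, Fin.prod_univ_castSucc, Fin.snoc_castSucc, Fin.succ_last, Fin.snoc_last,
      Fin.succ_castSucc]
    ring_nf
  calc (∫⁻ y, ∫⁻ x, F (e.symm (x, y)) ∂μ ∂(Measure.pi fun _ : Fin (m+1) => μ))
      ≤ ∫⁻ y, ENNReal.ofReal b *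
          ENNReal.ofReal ((∏ j : Fin m,
            min (y j.castSucc) (y j.succ) ^ (-γ) * max (y j.castSucc) (y j.succ) ^ (γ-1))
            * y (Fin.last m) ^ (-(1:ℝ)/2)) ∂(Measure.pi fun _ : Fin (m+1) => μ) := by
        apply lintegral_mono_ae
        filter_upwards [ae_pi_mem (m+1)] with y hy
        have hP : 0 ≤ ∏ j : Fin m,
            min (y j.castSucc) (y j.succ) ^ (-γ) * max (y j.castSucc) (y j.succ) ^ (γ-1) :=
          Finset.prod_nonneg fun j _ => mul_nonneg
            (rpow_nonneg (le_min (hy j.castSucc).1.le (hy j.succ).1.le) _)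
            (rpow_nonneg (le_trans (le_min (hy j.castSucc).1.le (hy j.succ).1.le) min_le_max) _)
        calc (∫⁻ x, F (e.symm (x, y)) ∂μ)
            = ENNReal.ofReal (∏ j : Fin m,
                min (y j.castSucc) (y j.succ) ^ (-γ) * max (y j.castSucc) (y j.succ) ^ (γ-1)) *
              ∫⁻ x, ENNReal.ofReal
                (min (y (Fin.last m)) x ^ (-γ) * max (y (Fin.last m)) x ^ (γ-1) * w x) ∂μ := by
              rw [← lintegral_const_mul' _ _ ENNReal.ofReal_ne_top]
              refine lintegral_congr fun x => ?_
              rw [hsnoc x y, ENNReal.ofReal_mul hP]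
          _ ≤ ENNReal.ofReal (∏ j : Fin m,
                min (y j.castSucc) (y j.succ) ^ (-γ) * max (y j.castSucc) (y j.succ) ^ (γ-1)) *
              ENNReal.ofReal (b * y (Fin.last m) ^ (-(1:ℝ)/2)) :=
              mul_le_mul_right (hker _ (hy (Fin.last m))) _
          _ = ENNReal.ofReal b * ENNReal.ofReal ((∏ j : Fin m,
                min (y j.castSucc) (y j.succ) ^ (-γ) * max (y j.castSucc) (y j.succ) ^ (γ-1))
                * y (Fin.last m) ^ (-(1:ℝ)/2)) := by
              rw [← ENNReal.ofReal_mul hP, ← ENNReal.ofReal_mul hb]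
              ring_nf
    _ = ENNReal.ofReal b * ∫⁻ y, ENNReal.ofReal ((∏ j : Fin m,
            min (y j.castSucc) (y j.succ) ^ (-γ) * max (y j.castSucc) (y j.succ) ^ (γ-1))
            * y (Fin.last m) ^ (-(1:ℝ)/2)) ∂(Measure.pi fun _ : Fin (m+1) => μ) :=
        lintegral_const_mul' _ _ ENNReal.ofReal_ne_top

lemma weighted {γ : ℝ} (hγ0 : 0 < γ) (hγ : γ < 1/2) : ∀ n : ℕ,
    (∫⁻ y, ENNReal.ofReal ((∏ j : Fin n,
        min (y j.castSucc) (y j.succ) ^ (-γ) * max (y j.castSucc) (y j.succ) ^ (γ-1))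
        * y (Fin.last n) ^ (-(1:ℝ)/2))
        ∂(Measure.pi fun _ : Fin (n+1) => volume.restrict (Ioo (0:ℝ) 1)))
      ≤ ENNReal.ofReal ((4/(1-2*γ))^n * 2)
  | 0 => by
    have hmp := measurePreserving_funUnique (volume.restrict (Ioo (0:ℝ) 1)) (Fin 1)
    have key := hmp.lintegral_comp_emb
      (MeasurableEquiv.funUnique (Fin 1) ℝ).measurableEmbedding
      (fun x : ℝ => ENNReal.ofReal (x ^ (-(1:ℝ)/2)))
    simp only [Finset.univ_eq_empty, Finset.prod_empty, one_mul]
    calc (∫⁻ y, ENNReal.ofReal (y (Fin.last 0) ^ (-(1:ℝ)/2))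
          ∂(Measure.pi fun _ : Fin 1 => volume.restrict (Ioo (0:ℝ) 1)))
        = ∫⁻ x in Ioo (0:ℝ) 1, ENNReal.ofReal (x ^ (-(1:ℝ)/2)) := key
      _ = ENNReal.ofReal ((1:ℝ) ^ (-(1:ℝ)/2+1) / (-(1:ℝ)/2+1)) :=
          lint_Ioo_left (by norm_num) one_pos
      _ ≤ ENNReal.ofReal ((4/(1-2*γ))^0 * 2) := by
          rw [Real.one_rpow]; norm_num
  | (n+1) => by
    have hb : (0:ℝ) ≤ 4/(1-2*γ) := div_nonneg (by norm_num) (by linarith)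
    refine (peel n (fun x => x ^ (-(1:ℝ)/2)) (by fun_prop) (4/(1-2*γ)) hb
      (fun c hc => ker_step hγ0 hγ hc)).trans ?_
    refine (mul_le_mul_right (weighted hγ0 hγ n) _).trans ?_
    rw [← ENNReal.ofReal_mul hb]
    apply le_of_eq
    congr 1
    ring

end PathBoundAux

open Real Set in
/-- Key computation of Lemma 2.1: for `0 < γ < 1/2` and `n ≥ 1`, the iterated integral
`∫_0^1 dt_0 ⋯ ∫_0^1 dt_n ∏_{j=1}^n (t_{j-1} ∧ t_j)^(-γ) (t_{j-1} ∨ t_j)^(γ-1)`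
is at most `(4/(1-2γ))^n`. -/
theorem path_integral_bound (γ : ℝ) (hγ0 : 0 < γ) (hγ : γ < 1 / 2) (n : ℕ) (hn : 1 ≤ n) :
    ∫⁻ t in Set.pi Set.univ (fun _ : Fin (n + 1) => Set.Ioo (0 : ℝ) 1),
        ENNReal.ofReal (∏ j : Fin n,
          (min (t j.castSucc) (t j.succ)) ^ (-γ) *
            (max (t j.castSucc) (t j.succ)) ^ (γ - 1)) ≤
      ENNReal.ofReal ((4 / (1 - 2 * γ)) ^ n) := by
  obtain ⟨m, rfl⟩ : ∃ m, n = m + 1 := ⟨n - 1, by omega⟩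
  rw [pi_restrict]
  have h1 : (∫⁻ t, ENNReal.ofReal (∏ j : Fin (m+1),
      min (t j.castSucc) (t j.succ) ^ (-γ) * max (t j.castSucc) (t j.succ) ^ (γ-1))
      ∂(Measure.pi fun _ : Fin (m+2) => volume.restrict (Ioo (0:ℝ) 1)))
      = ∫⁻ t, ENNReal.ofReal ((∏ j : Fin (m+1),
        min (t j.castSucc) (t j.succ) ^ (-γ) * max (t j.castSucc) (t j.succ) ^ (γ-1))
        * (fun _ : ℝ => (1:ℝ)) (t (Fin.last (m+1))))
        ∂(Measure.pi fun _ : Fin (m+2) => volume.restrict (Ioo (0:ℝ) 1)) :=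
    lintegral_congr fun t => by simp
  rw [h1]
  refine (peel m (fun _ => (1:ℝ)) measurable_const 2 (by norm_num)
    (fun c hc => ?_)).trans ?_
  · simpa using ker_base hγ0 hγ hc
  · refine (mul_le_mul_right (weighted hγ0 hγ m) _).trans ?_
    rw [← ENNReal.ofReal_mul (by norm_num)]
    apply ENNReal.ofReal_le_ofReal
    have hp : (0:ℝ) ≤ (4/(1-2*γ))^m := pow_nonneg (div_nonneg (by norm_num) (by linarith)) m
    have hC4 : (4:ℝ) ≤ 4/(1-2*γ) := by
      rw [le_div_iff₀ (by linarith)]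
      nlinarith
    calc 2 * ((4/(1-2*γ))^m * 2) = 4 * (4/(1-2*γ))^m := by ring
      _ ≤ (4/(1-2*γ)) * (4/(1-2*γ))^m := mul_le_mul_of_nonneg_right hC4 hp
      _ = (4/(1-2*γ))^(m+1) := by rw [pow_succ]; ring
end

section
/- Let d ≥ 1 be an integer, β > 0, 0 < γ < 1, n ≥ 1 an integer, and let ρ : [0,∞) → [0,1] be measurable with ∫_{ℝ^d} ρ(|x|^d) dx = 1. Fix x_0 = 0 ∈ ℝ^d. Then ∫_0^1 dt_0 ∫_{(ℝ^d×(0,1])^n} ∏_{j=1}^n ρ(β^(−1)·(t_{j−1} ∨ t_j)^(1−γ)·(t_{j−1} ∧ t_j)^γ·|x_j − x_{j−1}|^d) ⊗_{j=1}^n d(x_j, t_j) = β^n · ∫_0^1 dt_0 ∫_0^1 dt_1 ⋯ ∫_0^1 dt_n ∏_{j=1}^n (t_{j−1} ∧ t_j)^(−γ)·(t_{j−1} ∨ t_j)^(γ−1). -/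
open MeasureTheory ENNReal

private lemma cons_measurable (d n : ℕ) (a : EuclideanSpace ℝ (Fin d)) :
    Measurable fun x : Fin n → EuclideanSpace ℝ (Fin d) =>
      (Fin.cons a x : Fin (n + 1) → EuclideanSpace ℝ (Fin d)) := by
  refine measurable_pi_iff.2 fun i => ?_
  refine Fin.cases ?_ ?_ i
  · simpa using measurable_const
  · intro k; simpa using measurable_pi_apply k

private lemma telescope_lintegral (d : ℕ) : ∀ (n : ℕ) (a : EuclideanSpace ℝ (Fin d))
    (f : Fin n → EuclideanSpace ℝ (Fin d) → ℝ≥0∞), (∀ j, Measurable (f j)) →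
    ∫⁻ x : Fin n → EuclideanSpace ℝ (Fin d),
      ∏ j : Fin n, f j ((Fin.cons a x : Fin (n+1) → EuclideanSpace ℝ (Fin d)) j.succ -
        (Fin.cons a x : Fin (n+1) → EuclideanSpace ℝ (Fin d)) j.castSucc)
      = ∏ j : Fin n, ∫⁻ y, f j y := by
  intro n
  induction n with
  | zero =>
    intro a f hf
    simp only [Finset.univ_eq_empty, Finset.prod_empty, lintegral_one]
    rw [MeasureTheory.volume_pi, Measure.pi_univ]
    simp
  | succ n ih =>
    intro a f hf
    have hF : Measurable fun x : Fin (n+1) → EuclideanSpace ℝ (Fin d) =>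
        ∏ j : Fin (n+1), f j ((Fin.cons a x : Fin (n+2) → _) j.succ -
          (Fin.cons a x : Fin (n+2) → _) j.castSucc) := by
      refine Finset.measurable_prod _ fun j _ => ?_
      exact (hf j).comp (((measurable_pi_apply j.succ).comp (cons_measurable d (n+1) a)).sub
        ((measurable_pi_apply j.castSucc).comp (cons_measurable d (n+1) a)))
    set F := fun x : Fin (n+1) → EuclideanSpace ℝ (Fin d) =>
        ∏ j : Fin (n+1), f j ((Fin.cons a x : Fin (n+2) → _) j.succ -
          (Fin.cons a x : Fin (n+2) → _) j.castSucc) with hFdef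
    have hmp := (MeasureTheory.volume_preserving_piFinSuccAbove
      (fun _ : Fin (n+1) => EuclideanSpace ℝ (Fin d)) 0).symm
    have h1 : ∫⁻ x, F x
        = ∫⁻ p : EuclideanSpace ℝ (Fin d) × (Fin n → EuclideanSpace ℝ (Fin d)),
            F (Fin.cons p.1 p.2) := by
      rw [← hmp.lintegral_comp_emb (MeasurableEquiv.measurableEmbedding _) F]
      refine lintegral_congr fun p => ?_
      congr 1
      simp [MeasurableEquiv.piFinSuccAbove, Fin.insertNthEquiv, Fin.insertNth_zero]
    have hconsP : Measurable fun p : EuclideanSpace ℝ (Fin d) × (Fin n → EuclideanSpace ℝ (Fin d)) =>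
        (Fin.cons p.1 p.2 : Fin (n+1) → EuclideanSpace ℝ (Fin d)) := by
      refine measurable_pi_iff.2 fun i => ?_
      refine Fin.cases ?_ ?_ i
      · simpa using measurable_fst
      · intro k; simp only [Fin.cons_succ]; exact (measurable_pi_apply k).comp measurable_snd
    have h2 : ∫⁻ p : EuclideanSpace ℝ (Fin d) × (Fin n → EuclideanSpace ℝ (Fin d)),
        F (Fin.cons p.1 p.2)
        = ∫⁻ x₀, ∫⁻ y : Fin n → EuclideanSpace ℝ (Fin d), F (Fin.cons x₀ y) := by
      exact lintegral_prod _ ((hF.comp hconsP).aemeasurable)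
    have hsplit : ∀ (x₀ : EuclideanSpace ℝ (Fin d)) (y : Fin n → EuclideanSpace ℝ (Fin d)),
        F (Fin.cons x₀ y) = f 0 (x₀ - a) *
          ∏ j : Fin n, f j.succ ((Fin.cons x₀ y : Fin (n+1) → _) j.succ -
            (Fin.cons x₀ y : Fin (n+1) → _) j.castSucc) := by
      intro x₀ y
      simp only [hFdef]
      rw [Fin.prod_univ_succ]
      congr 1 <;>
        first
          | norm_num
          | exact Finset.prod_congr rfl fun j _ => by
              congr 1
              rw [← Fin.succ_castSucc]
              simp
    calc ∫⁻ x, F x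
        = ∫⁻ x₀, ∫⁻ y : Fin n → EuclideanSpace ℝ (Fin d), F (Fin.cons x₀ y) := by
          rw [h1, h2]
      _ = ∫⁻ x₀, f 0 (x₀ - a) * ∏ j : Fin n, ∫⁻ y, f j.succ y := by
          refine lintegral_congr fun x₀ => ?_
          simp_rw [hsplit x₀]
          rw [lintegral_const_mul _ (by
            refine Finset.measurable_prod _ fun j _ => ?_
            exact (hf j.succ).comp (((measurable_pi_apply j.succ).comp
              (cons_measurable d n x₀)).sub ((measurable_pi_apply j.castSucc).comp
              (cons_measurable d n x₀))))]
          rw [ih x₀ (fun j => f j.succ) (fun j => hf j.succ)]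
      _ = (∫⁻ x₀, f 0 (x₀ - a)) * ∏ j : Fin n, ∫⁻ y, f j.succ y := by
          exact lintegral_mul_const _ ((hf 0).comp (measurable_id.sub measurable_const))
      _ = ∏ j : Fin (n+1), ∫⁻ y, f j y := by
          rw [lintegral_sub_right_eq_self (f 0) a, Fin.prod_univ_succ]

private lemma scaling_lintegral (d : ℕ) (hd : 1 ≤ d) (ρ : ℝ → ℝ) (hρm : Measurable ρ)
    (hρ0 : ∀ r, 0 ≤ ρ r)
    (hnorm : ∫ z : EuclideanSpace ℝ (Fin d), ρ (‖z‖ ^ d) = 1)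
    (c : ℝ) (hc : 0 < c) :
    ∫⁻ y : EuclideanSpace ℝ (Fin d), ENNReal.ofReal (ρ (c * ‖y‖ ^ d))
      = ENNReal.ofReal c⁻¹ := by
  have hdR : (d : ℝ) ≠ 0 := Nat.cast_ne_zero.2 (by omega)
  set r : ℝ := c ^ (-(1 : ℝ) / d) with hrdef
  have hr : 0 < r := Real.rpow_pos_of_pos hc _
  have hrd : r ^ d = c⁻¹ := by
    rw [hrdef, ← Real.rpow_natCast (c ^ (-(1:ℝ)/d)) d, ← Real.rpow_mul hc.le]
    rw [div_mul_cancel₀ _ hdR, Real.rpow_neg_one]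
  have hint : Integrable (fun z : EuclideanSpace ℝ (Fin d) => ρ (‖z‖ ^ d)) := by
    by_contra h
    rw [integral_undef h] at hnorm
    norm_num at hnorm
  have hone : ∫⁻ z : EuclideanSpace ℝ (Fin d), ENNReal.ofReal (ρ (‖z‖ ^ d)) = 1 := by
    rw [← ofReal_integral_eq_lintegral_ofReal hint (Filter.Eventually.of_forall fun z => hρ0 _)]
    rw [hnorm]; simp
  have hg : Measurable fun y : EuclideanSpace ℝ (Fin d) => ENNReal.ofReal (ρ (c * ‖y‖ ^ d)) := by
    exact ENNReal.measurable_ofReal.comp (hρm.comp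
      (measurable_const.mul (measurable_norm.pow measurable_const)))
  have key : ∫⁻ z : EuclideanSpace ℝ (Fin d), ENNReal.ofReal (ρ (c * ‖r • z‖ ^ d))
      = ENNReal.ofReal c *
        ∫⁻ y : EuclideanSpace ℝ (Fin d), ENNReal.ofReal (ρ (c * ‖y‖ ^ d)) := by
    have := lintegral_map (μ := (volume : Measure (EuclideanSpace ℝ (Fin d)))) hg (measurable_const_smul r :
      Measurable fun z : EuclideanSpace ℝ (Fin d) => r • z)
    rw [show (fun z : EuclideanSpace ℝ (Fin d) => r • z) = (r • ·) from rfl] at this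
    rw [Measure.map_addHaar_smul volume hr.ne'] at this
    rw [lintegral_smul_measure] at this
    rw [← this]
    congr 1
    rw [finrank_euclideanSpace_fin, abs_inv, abs_of_pos (pow_pos hr d), hrd, inv_inv]
  have hsmul : ∀ z : EuclideanSpace ℝ (Fin d), c * ‖r • z‖ ^ d = ‖z‖ ^ d := by
    intro z
    rw [norm_smul, Real.norm_eq_abs, abs_of_pos hr, mul_pow, ← mul_assoc, hrd,
      mul_inv_cancel₀ hc.ne', one_mul]
  simp_rw [hsmul] at key
  rw [hone] at key
  have hcne : ENNReal.ofReal c ≠ 0 := by simp [hc]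
  have := key.symm
  calc ∫⁻ y : EuclideanSpace ℝ (Fin d), ENNReal.ofReal (ρ (c * ‖y‖ ^ d))
      = (ENNReal.ofReal c)⁻¹ * (ENNReal.ofReal c *
          ∫⁻ y : EuclideanSpace ℝ (Fin d), ENNReal.ofReal (ρ (c * ‖y‖ ^ d))) := by
        rw [← mul_assoc, ENNReal.inv_mul_cancel hcne ENNReal.ofReal_ne_top, one_mul]
    _ = (ENNReal.ofReal c)⁻¹ * 1 := by rw [key]
    _ = ENNReal.ofReal c⁻¹ := by rw [mul_one, ← ENNReal.ofReal_inv_of_pos hc]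

/-- Expected number of labelled paths of length `n` in the weight-dependent random connection
model with preferential attachment kernel `g^pa(s,t) = β⁻¹ (s∨t)^(1-γ) (s∧t)^γ`:
integrating out the spatial coordinates `x_1, …, x_n` (with `x_0 = 0`) via successive changes
of variables yields `β^n` times the purely temporal integral. -/
theorem path_integral_spatial_reduction (d : ℕ) (hd : 1 ≤ d) (β γ : ℝ)
    (hβ : 0 < β) (hγ0 : 0 < γ) (hγ1 : γ < 1) (n : ℕ) (hn : 1 ≤ n)
    (ρ : ℝ → ℝ) (hρm : Measurable ρ) (hρ0 : ∀ r, 0 ≤ ρ r) (hρ1 : ∀ r, ρ r ≤ 1)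
    (hnorm : ∫ z : EuclideanSpace ℝ (Fin d), ρ (‖z‖ ^ d) = 1) :
    ∫⁻ t in Set.pi Set.univ (fun _ : Fin (n + 1) => Set.Ioc (0 : ℝ) 1),
      ∫⁻ x : Fin n → EuclideanSpace ℝ (Fin d),
        ENNReal.ofReal (∏ j : Fin n,
          ρ (β⁻¹ * (max (t j.castSucc) (t j.succ)) ^ (1 - γ) *
              (min (t j.castSucc) (t j.succ)) ^ γ *
              ‖(Fin.cons 0 x : Fin (n + 1) → EuclideanSpace ℝ (Fin d)) j.succ -
                (Fin.cons 0 x : Fin (n + 1) → EuclideanSpace ℝ (Fin d)) j.castSucc‖ ^ d)) =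
    ENNReal.ofReal ((β : ℝ) ^ n) *
      ∫⁻ t in Set.pi Set.univ (fun _ : Fin (n + 1) => Set.Ioc (0 : ℝ) 1),
        ENNReal.ofReal (∏ j : Fin n,
          (min (t j.castSucc) (t j.succ)) ^ (-γ) *
            (max (t j.castSucc) (t j.succ)) ^ (γ - 1)) := by
  set S := Set.pi Set.univ (fun _ : Fin (n + 1) => Set.Ioc (0 : ℝ) 1) with hSdef
  have hS : MeasurableSet S := MeasurableSet.univ_pi fun _ => measurableSet_Ioc
  have step1 : ∫⁻ t in S,
      ∫⁻ x : Fin n → EuclideanSpace ℝ (Fin d),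
        ENNReal.ofReal (∏ j : Fin n,
          ρ (β⁻¹ * (max (t j.castSucc) (t j.succ)) ^ (1 - γ) *
              (min (t j.castSucc) (t j.succ)) ^ γ *
              ‖(Fin.cons 0 x : Fin (n + 1) → EuclideanSpace ℝ (Fin d)) j.succ -
                (Fin.cons 0 x : Fin (n + 1) → EuclideanSpace ℝ (Fin d)) j.castSucc‖ ^ d))
      = ∫⁻ t in S, ENNReal.ofReal (β ^ n) * ENNReal.ofReal (∏ j : Fin n,
          (min (t j.castSucc) (t j.succ)) ^ (-γ) *
            (max (t j.castSucc) (t j.succ)) ^ (γ - 1)) := by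
    refine setLIntegral_congr_fun hS (fun t ht => ?_)
    have hmem : ∀ i : Fin (n+1), t i ∈ Set.Ioc (0:ℝ) 1 := fun i => ht i (Set.mem_univ i)
    set c : Fin n → ℝ := fun j => β⁻¹ * (max (t j.castSucc) (t j.succ)) ^ (1 - γ) *
        (min (t j.castSucc) (t j.succ)) ^ γ with hcdef
    have hmaxpos : ∀ j : Fin n, 0 < max (t j.castSucc) (t j.succ) :=
      fun j => lt_max_of_lt_left (hmem j.castSucc).1
    have hminpos : ∀ j : Fin n, 0 < min (t j.castSucc) (t j.succ) :=
      fun j => lt_min (hmem j.castSucc).1 (hmem j.succ).1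
    have hcpos : ∀ j, 0 < c j := fun j =>
      mul_pos (mul_pos (inv_pos.2 hβ) (Real.rpow_pos_of_pos (hmaxpos j) _))
        (Real.rpow_pos_of_pos (hminpos j) _)
    have hcinv : ∀ j : Fin n, (c j)⁻¹ = β * ((min (t j.castSucc) (t j.succ)) ^ (-γ) *
        (max (t j.castSucc) (t j.succ)) ^ (γ - 1)) := by
      intro j
      rw [hcdef]
      rw [mul_inv, mul_inv, inv_inv]
      rw [← Real.rpow_neg (hmaxpos j).le, ← Real.rpow_neg (hminpos j).le]
      ring_nf
    calc ∫⁻ x : Fin n → EuclideanSpace ℝ (Fin d),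
          ENNReal.ofReal (∏ j : Fin n,
            ρ (c j * ‖(Fin.cons 0 x : Fin (n + 1) → EuclideanSpace ℝ (Fin d)) j.succ -
                (Fin.cons 0 x : Fin (n + 1) → EuclideanSpace ℝ (Fin d)) j.castSucc‖ ^ d))
        = ∫⁻ x : Fin n → EuclideanSpace ℝ (Fin d),
            ∏ j : Fin n, ENNReal.ofReal
              (ρ (c j * ‖(Fin.cons 0 x : Fin (n + 1) → EuclideanSpace ℝ (Fin d)) j.succ -
                (Fin.cons 0 x : Fin (n + 1) → EuclideanSpace ℝ (Fin d)) j.castSucc‖ ^ d)) := by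
          refine lintegral_congr fun x => ?_
          exact ENNReal.ofReal_prod_of_nonneg fun j _ => hρ0 _
      _ = ∏ j : Fin n, ∫⁻ y : EuclideanSpace ℝ (Fin d),
            ENNReal.ofReal (ρ (c j * ‖y‖ ^ d)) := by
          exact telescope_lintegral d n 0
            (fun j y => ENNReal.ofReal (ρ (c j * ‖y‖ ^ d)))
            (fun j => ENNReal.measurable_ofReal.comp (hρm.comp
              (measurable_const.mul (measurable_norm.pow measurable_const))))
      _ = ∏ j : Fin n, ENNReal.ofReal ((c j)⁻¹) := by
          exact Finset.prod_congr rfl fun j _ =>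
            scaling_lintegral d hd ρ hρm hρ0 hnorm (c j) (hcpos j)
      _ = ENNReal.ofReal (β ^ n) * ENNReal.ofReal (∏ j : Fin n,
            (min (t j.castSucc) (t j.succ)) ^ (-γ) *
              (max (t j.castSucc) (t j.succ)) ^ (γ - 1)) := by
          simp_rw [hcinv]
          rw [← ENNReal.ofReal_prod_of_nonneg (fun j _ => by have h1 := hminpos j; have h2 := hmaxpos j; positivity)]
          rw [Finset.prod_mul_distrib, Finset.prod_const, Finset.card_univ, Fintype.card_fin]
          rw [ENNReal.ofReal_mul (by positivity)]
  rw [step1]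
  rw [lintegral_const_mul' _ _ ENNReal.ofReal_ne_top]
end

section
/- Let γ ∈ (0,1), let t_0 ∈ (0,1), and let k ≥ 1 be an integer. Then the iterated integral ∫_{t_0}^1 dt_1 ∫_{t_1}^1 dt_2 ⋯ ∫_{t_{k−1}}^1 dt_k of t_0^(−γ) · (∏_{j=1}^{k−1} t_j^(−1)) · t_k^(γ−1) is at most t_0^(−γ) · (log(1/t_0))^(k−1) / (γ · (k−1)!). -/
open MeasureTheory


lemma measSet (n : ℕ) (a b : ℝ) :
    MeasurableSet {t : Fin n → ℝ | StrictMono t ∧ ∀ i, t i ∈ Set.Ioo a b} := by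
  have h1 : {t : Fin n → ℝ | StrictMono t}
      = ⋂ (i) (j) (_ : i < j), {t : Fin n → ℝ | t i < t j} := by
    ext t
    simp only [Set.mem_setOf_eq, Set.mem_iInter]
    exact ⟨fun h i j hij => h hij, fun h _ _ hij => h _ _ hij⟩
  have h2 : {t : Fin n → ℝ | ∀ i, t i ∈ Set.Ioo a b}
      = ⋂ i, (fun t : Fin n → ℝ => t i) ⁻¹' Set.Ioo a b := by
    ext t; simp
  rw [Set.setOf_and, h1, h2]
  exact (MeasurableSet.iInter fun i => MeasurableSet.iInter fun j =>
      MeasurableSet.iInter fun _ =>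
        measurableSet_lt (measurable_pi_apply i) (measurable_pi_apply j)).inter
    (MeasurableSet.iInter fun i => (measurable_pi_apply i) measurableSet_Ioo)

lemma strictMono_cons_iff {n : ℕ} {x : ℝ} {y : Fin n → ℝ} :
    StrictMono (Fin.cons x y : Fin (n + 1) → ℝ) ↔ StrictMono y ∧ ∀ i, x < y i := by
  constructor
  · intro h
    refine ⟨fun i j hij => ?_, fun i => ?_⟩
    · have := h (show (i.succ : Fin (n+1)) < j.succ from Fin.succ_lt_succ_iff.mpr hij)
      simpa using this
    · have := h (Fin.succ_pos i)
      simpa using this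
  · rintro ⟨hy, hx⟩
    intro i j hij
    induction i using Fin.cases with
    | zero =>
      obtain ⟨j', rfl⟩ := Fin.eq_succ_of_ne_zero (Fin.pos_iff_ne_zero.mp hij)
      simpa using hx j'
    | succ i' =>
      obtain ⟨j', rfl⟩ := Fin.eq_succ_of_ne_zero
        (Fin.pos_iff_ne_zero.mp ((Fin.succ_pos i').trans hij))
      simpa using hy (Fin.succ_lt_succ_iff.mp hij)

lemma strictMono_snoc_iff {n : ℕ} {x : ℝ} {y : Fin n → ℝ} :
    StrictMono (Fin.snoc y x : Fin (n + 1) → ℝ) ↔ StrictMono y ∧ ∀ i, y i < x := by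
  constructor
  · intro h
    refine ⟨fun i j hij => ?_, fun i => ?_⟩
    · have := h (show (i.castSucc : Fin (n+1)) < j.castSucc from Fin.castSucc_lt_castSucc_iff.mpr hij)
      simpa using this
    · have := h (Fin.castSucc_lt_last i)
      simpa using this
  · rintro ⟨hy, hx⟩
    intro i j hij
    induction j using Fin.lastCases with
    | last =>
      induction i using Fin.lastCases with
      | last => exact absurd hij (lt_irrefl _)
      | cast i => simpa using hx i
    | cast j =>
      induction i using Fin.lastCases with
      | last => exact absurd (hij.trans (Fin.castSucc_lt_last j)) (lt_irrefl _)
      | cast i =>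
        simpa using hy (Fin.castSucc_lt_castSucc_iff.mp hij)


lemma oneDim (n : ℕ) (a : ℝ) (ha : 0 < a) (ha1 : a ≤ 1) :
    ∫⁻ x in Set.Ioo a 1, ENNReal.ofReal (x⁻¹ * Real.log (1 / x) ^ n / (n.factorial : ℝ)) ≤
      ENNReal.ofReal (Real.log (1 / a) ^ (n + 1) / ((n + 1).factorial : ℝ)) := by
  set g : ℝ → ℝ := fun x => x⁻¹ * Real.log (1 / x) ^ n / (n.factorial : ℝ) with hg
  have hgc : ContinuousOn g (Set.Icc a 1) := by
    apply ContinuousOn.div_const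
    apply ContinuousOn.mul
    · exact continuousOn_id.inv₀ fun x hx => (lt_of_lt_of_le ha hx.1).ne'
    · apply ContinuousOn.pow
      apply ContinuousOn.log
      · exact continuousOn_const.div continuousOn_id fun x hx => (lt_of_lt_of_le ha hx.1).ne'
      · intro x hx
        have hx0 : (0:ℝ) < x := lt_of_lt_of_le ha hx.1
        positivity
  have hint : IntegrableOn g (Set.Ioo a 1) :=
    (hgc.integrableOn_Icc).mono_set Set.Ioo_subset_Icc_self
  have hnn : ∀ x ∈ Set.Ioo a 1, 0 ≤ g x := by
    intro x hx
    have hx0 : (0:ℝ) < x := ha.trans hx.1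
    have hlog : 0 ≤ Real.log (1 / x) := Real.log_nonneg (one_le_one_div hx0 hx.2.le)
    have : (0:ℝ) ≤ (n.factorial : ℝ) := Nat.cast_nonneg _
    positivity
  rw [← ofReal_integral_eq_lintegral_ofReal hint
    ((ae_restrict_iff' measurableSet_Ioo).mpr (ae_of_all _ hnn))]
  apply ENNReal.ofReal_le_ofReal
  have key : ∫ x in Set.Ioo a 1, g x = Real.log (1 / a) ^ (n + 1) / ((n + 1).factorial : ℝ) := by
    rw [← integral_Ioc_eq_integral_Ioo, ← intervalIntegral.integral_of_le ha1]
    set F : ℝ → ℝ := fun x => -((-Real.log x) ^ (n + 1)) / ((n + 1).factorial : ℝ) with hF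
    have hder : ∀ x ∈ Set.uIcc a 1, HasDerivAt F (g x) x := by
      intro x hx
      rw [Set.uIcc_of_le ha1] at hx
      have hx0 : (0:ℝ) < x := lt_of_lt_of_le ha hx.1
      have h1 : HasDerivAt (fun x => -Real.log x) (-x⁻¹) x := (Real.hasDerivAt_log hx0.ne').neg
      have h2 : HasDerivAt (fun x => (-Real.log x) ^ (n + 1))
          (((n:ℝ) + 1) * (-Real.log x) ^ n * (-x⁻¹)) x := by
        have := h1.fun_pow (n + 1)
        simpa using this
      have h3 := (h2.neg).div_const ((n + 1).factorial : ℝ)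
      refine h3.congr_deriv ?_
      have hfac : ((n + 1).factorial : ℝ) = ((n:ℝ) + 1) * (n.factorial : ℝ) := by
        rw [Nat.factorial_succ]; push_cast; ring
      have hfp : (0:ℝ) < (n.factorial : ℝ) := by exact_mod_cast n.factorial_pos
      rw [hg]
      simp only [one_div, Real.log_inv]
      rw [hfac]
      field_simp
    have hii : IntervalIntegrable g volume a 1 := by
      apply ContinuousOn.intervalIntegrable
      rwa [Set.uIcc_of_le ha1]
    rw [intervalIntegral.integral_eq_sub_of_hasDerivAt hder hii]
    rw [hF]
    simp only [Real.log_one, neg_zero, one_div, Real.log_inv]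
    rw [zero_pow (Nat.succ_ne_zero n)]
    ring
  rw [key]

lemma rpowInt (γ a : ℝ) (hγ : 0 < γ) (ha : 0 < a) (ha1 : a ≤ 1) :
    ∫⁻ x in Set.Ioo a 1, ENNReal.ofReal (x ^ (γ - 1)) ≤ ENNReal.ofReal (1 / γ) := by
  set g : ℝ → ℝ := fun x => x ^ (γ - 1) with hg
  have hgc : ContinuousOn g (Set.Icc a 1) := by
    apply ContinuousOn.rpow_const continuousOn_id
    intro x hx
    exact Or.inl (lt_of_lt_of_le ha hx.1).ne'
  have hint : IntegrableOn g (Set.Ioo a 1) :=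
    (hgc.integrableOn_Icc).mono_set Set.Ioo_subset_Icc_self
  have hnn : ∀ x ∈ Set.Ioo a 1, 0 ≤ g x := fun x hx =>
    Real.rpow_nonneg (ha.trans hx.1).le _
  rw [← ofReal_integral_eq_lintegral_ofReal hint
    ((ae_restrict_iff' measurableSet_Ioo).mpr (ae_of_all _ hnn))]
  apply ENNReal.ofReal_le_ofReal
  have key : ∫ x in Set.Ioo a 1, g x = (1 - a ^ γ) / γ := by
    rw [← integral_Ioc_eq_integral_Ioo, ← intervalIntegral.integral_of_le ha1]
    have hder : ∀ x ∈ Set.uIcc a 1, HasDerivAt (fun x => x ^ γ / γ) (g x) x := by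
      intro x hx
      rw [Set.uIcc_of_le ha1] at hx
      have hx0 : (0:ℝ) < x := lt_of_lt_of_le ha hx.1
      have := (Real.hasDerivAt_rpow_const (p := γ) (Or.inl hx0.ne')).div_const γ
      refine this.congr_deriv ?_
      rw [hg]
      field_simp
    have hii : IntervalIntegrable g volume a 1 := by
      apply ContinuousOn.intervalIntegrable
      rwa [Set.uIcc_of_le ha1]
    rw [intervalIntegral.integral_eq_sub_of_hasDerivAt hder hii]
    rw [Real.one_rpow]
    ring
  rw [key]
  have h1 : (1 : ℝ) - a ^ γ ≤ 1 := by nlinarith [Real.rpow_nonneg ha.le γ]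
  gcongr


lemma insertNth_zero_eq {n : ℕ} (x : ℝ) (y : Fin n → ℝ) :
    Fin.insertNth (α := fun _ : Fin (n + 1) => ℝ) 0 x y = Fin.cons x y := by
  funext i
  induction i using Fin.cases with
  | zero => simp
  | succ j =>
    rw [← Fin.succAbove_zero, Fin.insertNth_apply_succAbove]
    simp [Fin.succAbove_zero]

lemma simplex_le (n : ℕ) : ∀ (a : ℝ), 0 < a → a ≤ 1 →
    ∫⁻ t in {t : Fin n → ℝ | StrictMono t ∧ ∀ i, t i ∈ Set.Ioo a 1},
      ENNReal.ofReal (∏ j, (t j)⁻¹) ≤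
      ENNReal.ofReal (Real.log (1 / a) ^ n / (n.factorial : ℝ)) := by
  induction n with
  | zero =>
    intro a ha ha1
    have hs : {t : Fin 0 → ℝ | StrictMono t ∧ ∀ i, t i ∈ Set.Ioo a 1} = Set.univ := by
      ext t
      simp only [Set.mem_setOf_eq, Set.mem_univ, iff_true]
      exact ⟨fun i => i.elim0, fun i => i.elim0⟩
    rw [hs, Measure.restrict_univ]
    simp only [Finset.univ_eq_empty, Finset.prod_empty, ENNReal.ofReal_one, lintegral_one,
      pow_zero, Nat.factorial_zero, Nat.cast_one, div_one]
    have : (volume : Measure (Fin 0 → ℝ)) Set.univ = 1 := by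
      rw [volume_pi, Measure.pi_univ]
      simp
    rw [this]
  | succ n ih =>
    intro a ha ha1
    set S := {t : Fin (n + 1) → ℝ | StrictMono t ∧ ∀ i, t i ∈ Set.Ioo a 1} with hS
    set F : (Fin (n + 1) → ℝ) → ENNReal := fun t => ENNReal.ofReal (∏ j, (t j)⁻¹) with hF
    have hFm : Measurable F :=
      ENNReal.measurable_ofReal.comp (Finset.measurable_prod _ fun j _ =>
        (measurable_pi_apply j).inv)
    have hSm := measSet (n + 1) a 1
    set e := MeasurableEquiv.piFinSuccAbove (fun _ : Fin (n + 1) => ℝ) 0 with he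
    have hmp := volume_preserving_piFinSuccAbove (fun _ : Fin (n + 1) => ℝ) 0
    have hGm : Measurable fun p : ℝ × (Fin n → ℝ) => S.indicator F (e.symm p) :=
      (hFm.indicator hSm).comp e.symm.measurable
    have hsymm : ∀ (x : ℝ) (y : Fin n → ℝ), e.symm (x, y) = Fin.cons x y := by
      intro x y
      rw [he]
      simp only [MeasurableEquiv.piFinSuccAbove_symm_apply]
      exact insertNth_zero_eq x y
    calc ∫⁻ t in S, F t
        = ∫⁻ t, S.indicator F t := (lintegral_indicator hSm F).symm
      _ = ∫⁻ p : ℝ × (Fin n → ℝ), S.indicator F (e.symm p) := by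
          rw [← (hmp.symm e).map_eq, lintegral_map_equiv]
      _ = ∫⁻ x : ℝ, ∫⁻ y : Fin n → ℝ, S.indicator F (e.symm (x, y)) := by
          rw [Measure.volume_eq_prod, lintegral_prod _ hGm.aemeasurable]
      _ ≤ ∫⁻ x : ℝ, (Set.Ioo a 1).indicator
            (fun x => ENNReal.ofReal (x⁻¹ * Real.log (1 / x) ^ n / (n.factorial : ℝ))) x := by
          apply lintegral_mono
          intro x
          by_cases hx : x ∈ Set.Ioo a 1
          · rw [Set.indicator_of_mem hx]
            have hx0 : (0:ℝ) < x := ha.trans hx.1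
            set T := {y : Fin n → ℝ | StrictMono y ∧ ∀ i, y i ∈ Set.Ioo x 1} with hT
            have step1 : ∀ y, S.indicator F (e.symm (x, y)) ≤
                T.indicator (fun y =>
                  ENNReal.ofReal x⁻¹ * ENNReal.ofReal (∏ j, (y j)⁻¹)) y := by
              intro y
              rw [hsymm]
              by_cases hy : Fin.cons x y ∈ S
              · obtain ⟨hmono, hmem⟩ := hy
                obtain ⟨hy1, hy2⟩ := strictMono_cons_iff.mp hmono
                have hTy : y ∈ T := by
                  refine ⟨hy1, fun i => ⟨hy2 i, ?_⟩⟩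
                  have := hmem i.succ
                  simpa using this.2
                rw [Set.indicator_of_mem (by exact ⟨hmono, hmem⟩), Set.indicator_of_mem hTy]
                rw [hF]
                simp only []
                rw [Fin.prod_univ_succ]
                simp only [Fin.cons_zero, Fin.cons_succ]
                rw [ENNReal.ofReal_mul (inv_nonneg.mpr hx0.le)]
              · rw [Set.indicator_of_notMem hy]
                exact zero_le
            calc ∫⁻ y, S.indicator F (e.symm (x, y))
                ≤ ∫⁻ y, T.indicator (fun y =>
                    ENNReal.ofReal x⁻¹ * ENNReal.ofReal (∏ j, (y j)⁻¹)) y :=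
                  lintegral_mono step1
              _ = ENNReal.ofReal x⁻¹ * ∫⁻ y in T, ENNReal.ofReal (∏ j, (y j)⁻¹) := by
                  rw [lintegral_indicator (measSet n x 1)]
                  exact lintegral_const_mul' _ _ ENNReal.ofReal_ne_top
              _ ≤ ENNReal.ofReal x⁻¹ *
                    ENNReal.ofReal (Real.log (1 / x) ^ n / (n.factorial : ℝ)) := by
                  exact mul_le_mul_right (ih x hx0 hx.2.le) _
              _ = ENNReal.ofReal (x⁻¹ * Real.log (1 / x) ^ n / (n.factorial : ℝ)) := by
                  rw [← ENNReal.ofReal_mul (inv_nonneg.mpr hx0.le)]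
                  rw [mul_div_assoc]
          · rw [Set.indicator_of_notMem hx]
            have hzero : ∀ y : Fin n → ℝ, S.indicator F (e.symm (x, y)) = 0 := by
              intro y
              rw [hsymm]
              rw [Set.indicator_of_notMem]
              intro hy
              exact hx (by simpa using hy.2 0)
            simp only [hzero, lintegral_zero, le_refl]
      _ = ∫⁻ x in Set.Ioo a 1,
            ENNReal.ofReal (x⁻¹ * Real.log (1 / x) ^ n / (n.factorial : ℝ)) :=
          lintegral_indicator measurableSet_Ioo _
      _ ≤ ENNReal.ofReal (Real.log (1 / a) ^ (n + 1) / ((n + 1).factorial : ℝ)) :=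
          oneDim n a ha ha1


lemma insertNth_last_eq {n : ℕ} (x : ℝ) (y : Fin n → ℝ) :
    Fin.insertNth (α := fun _ : Fin (n + 1) => ℝ) (Fin.last n) x y = Fin.snoc y x := by
  funext i
  induction i using Fin.lastCases with
  | last => simp
  | cast j =>
    rw [← Fin.succAbove_last, Fin.insertNth_apply_succAbove]
    simp [Fin.succAbove_last]

/-- Lemma A.1(a): for `γ ∈ (0,1)`, `t₀ ∈ (0,1)` and `k ≥ 1`, the iterated integral
`∫_{t₀}^1 dt_1 ⋯ ∫_{t_{k-1}}^1 dt_k  t₀^(-γ) (∏_{j=1}^{k-1} t_j^(-1)) t_k^(γ-1)`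
(i.e. the integral over the region `t₀ < t_1 < ⋯ < t_k < 1`)
is at most `t₀^(-γ) (log(1/t₀))^(k-1) / (γ (k-1)!)`. -/
theorem increasing_skeleton_integral (γ t₀ : ℝ) (hγ : γ ∈ Set.Ioo (0 : ℝ) 1)
    (ht₀ : t₀ ∈ Set.Ioo (0 : ℝ) 1) (k : ℕ) (hk : 1 ≤ k) :
    ∫⁻ t in {t : Fin k → ℝ | StrictMono t ∧ ∀ i, t i ∈ Set.Ioo t₀ 1},
        ENNReal.ofReal (t₀ ^ (-γ) *
          ∏ j : Fin k, (if (j : ℕ) < k - 1 then (t j)⁻¹ else (t j) ^ (γ - 1))) ≤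
      ENNReal.ofReal (t₀ ^ (-γ) * Real.log (1 / t₀) ^ (k - 1) /
        (γ * (Nat.factorial (k - 1) : ℝ))) := by
  obtain ⟨n, rfl⟩ : ∃ n, k = n + 1 := ⟨k - 1, (Nat.succ_pred_eq_of_pos hk).symm⟩
  simp only [Nat.add_sub_cancel]
  obtain ⟨hγ0, hγ1⟩ := hγ
  obtain ⟨ht0, ht1⟩ := ht₀
  set L := Real.log (1 / t₀) with hL
  have hL0 : 0 ≤ L := Real.log_nonneg (one_le_one_div ht0 ht1.le)
  have hc0 : (0:ℝ) ≤ t₀ ^ (-γ) := Real.rpow_nonneg ht0.le _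
  have hLn : (0:ℝ) ≤ L ^ n / (n.factorial : ℝ) :=
    div_nonneg (pow_nonneg hL0 n) (Nat.cast_nonneg _)
  set S := {t : Fin (n + 1) → ℝ | StrictMono t ∧ ∀ i, t i ∈ Set.Ioo t₀ 1} with hS
  set F : (Fin (n + 1) → ℝ) → ENNReal := fun t =>
    ENNReal.ofReal (t₀ ^ (-γ) *
      ∏ j : Fin (n + 1), (if (j : ℕ) < n then (t j)⁻¹ else (t j) ^ (γ - 1))) with hF
  have hFm : Measurable F := by
    apply ENNReal.measurable_ofReal.comp
    apply Measurable.const_mul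
    apply Finset.measurable_prod
    intro j _
    split_ifs
    · exact (measurable_pi_apply j).inv
    · exact Measurable.comp (f := fun t : Fin (n+1) → ℝ => t j)
        (g := fun x : ℝ => x ^ (γ - 1)) (by fun_prop) (measurable_pi_apply j)
  have hSm := measSet (n + 1) t₀ 1
  set e := MeasurableEquiv.piFinSuccAbove (fun _ : Fin (n + 1) => ℝ) (Fin.last n) with he
  have hmp := volume_preserving_piFinSuccAbove (fun _ : Fin (n + 1) => ℝ) (Fin.last n)
  have hGm : Measurable fun p : ℝ × (Fin n → ℝ) => S.indicator F (e.symm p) :=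
    (hFm.indicator hSm).comp e.symm.measurable
  have hsymm : ∀ (x : ℝ) (y : Fin n → ℝ), e.symm (x, y) = Fin.snoc y x := by
    intro x y
    rw [he]
    simp only [MeasurableEquiv.piFinSuccAbove_symm_apply]
    exact insertNth_last_eq x y
  set D := ENNReal.ofReal (t₀ ^ (-γ) * (L ^ n / (n.factorial : ℝ))) with hD
  calc ∫⁻ t in S, F t
      = ∫⁻ t, S.indicator F t := (lintegral_indicator hSm F).symm
    _ = ∫⁻ p : ℝ × (Fin n → ℝ), S.indicator F (e.symm p) := by
        rw [← (hmp.symm e).map_eq, lintegral_map_equiv]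
    _ = ∫⁻ x : ℝ, ∫⁻ y : Fin n → ℝ, S.indicator F (e.symm (x, y)) := by
        rw [Measure.volume_eq_prod, lintegral_prod _ hGm.aemeasurable]
    _ ≤ ∫⁻ x : ℝ, (Set.Ioo t₀ 1).indicator
          (fun x => D * ENNReal.ofReal (x ^ (γ - 1))) x := by
        apply lintegral_mono
        intro x
        by_cases hx : x ∈ Set.Ioo t₀ 1
        · rw [Set.indicator_of_mem hx]
          have hx0 : (0:ℝ) < x := ht0.trans hx.1
          have hcx : (0:ℝ) ≤ t₀ ^ (-γ) * x ^ (γ - 1) :=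
            mul_nonneg hc0 (Real.rpow_nonneg hx0.le _)
          set T := {y : Fin n → ℝ | StrictMono y ∧ ∀ i, y i ∈ Set.Ioo t₀ 1} with hT
          have step1 : ∀ y, S.indicator F (e.symm (x, y)) ≤
              T.indicator (fun y =>
                ENNReal.ofReal (t₀ ^ (-γ) * x ^ (γ - 1)) *
                  ENNReal.ofReal (∏ j, (y j)⁻¹)) y := by
            intro y
            rw [hsymm]
            by_cases hy : Fin.snoc y x ∈ S
            · obtain ⟨hmono, hmem⟩ := hy
              obtain ⟨hy1, _⟩ := strictMono_snoc_iff.mp hmono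
              have hTy : y ∈ T := by
                refine ⟨hy1, fun i => ?_⟩
                have := hmem i.castSucc
                simpa using this
              rw [Set.indicator_of_mem (by exact ⟨hmono, hmem⟩), Set.indicator_of_mem hTy]
              set t : Fin (n + 1) → ℝ := Fin.snoc y x with ht
              have hprod : (∏ j : Fin (n + 1),
                  (if (j : ℕ) < n then (t j)⁻¹ else (t j) ^ (γ - 1)))
                  = (∏ i : Fin n, (y i)⁻¹) * x ^ (γ - 1) := by
                rw [Fin.prod_univ_castSucc]
                congr 1
                · apply Finset.prod_congr rfl
                  intro i _
                  rw [if_pos (by simpa using i.isLt)]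
                  rw [ht]
                  simp
                · rw [if_neg (by simp)]
                  rw [ht]
                  simp
              rw [hF]
              simp only []
              rw [hprod, ← ENNReal.ofReal_mul hcx]
              apply le_of_eq
              congr 1
              ring
            · rw [Set.indicator_of_notMem hy]
              exact zero_le
          calc ∫⁻ y, S.indicator F (e.symm (x, y))
              ≤ ∫⁻ y, T.indicator (fun y =>
                  ENNReal.ofReal (t₀ ^ (-γ) * x ^ (γ - 1)) *
                    ENNReal.ofReal (∏ j, (y j)⁻¹)) y := lintegral_mono step1
            _ = ENNReal.ofReal (t₀ ^ (-γ) * x ^ (γ - 1)) *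
                  ∫⁻ y in T, ENNReal.ofReal (∏ j, (y j)⁻¹) := by
                rw [lintegral_indicator (measSet n t₀ 1)]
                exact lintegral_const_mul' _ _ ENNReal.ofReal_ne_top
            _ ≤ ENNReal.ofReal (t₀ ^ (-γ) * x ^ (γ - 1)) *
                  ENNReal.ofReal (L ^ n / (n.factorial : ℝ)) :=
                mul_le_mul_right (simplex_le n t₀ ht0 ht1.le) _
            _ = D * ENNReal.ofReal (x ^ (γ - 1)) := by
                rw [hD, ENNReal.ofReal_mul hc0, ENNReal.ofReal_mul hc0]
                ring
        · rw [Set.indicator_of_notMem hx]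
          have hzero : ∀ y : Fin n → ℝ, S.indicator F (e.symm (x, y)) = 0 := by
            intro y
            rw [hsymm, Set.indicator_of_notMem]
            intro hy
            exact hx (by simpa using hy.2 (Fin.last n))
          simp only [hzero, lintegral_zero, le_refl]
    _ = D * ∫⁻ x in Set.Ioo t₀ 1, ENNReal.ofReal (x ^ (γ - 1)) := by
        rw [lintegral_indicator measurableSet_Ioo]
        exact lintegral_const_mul' _ _ ENNReal.ofReal_ne_top
    _ ≤ D * ENNReal.ofReal (1 / γ) :=
        mul_le_mul_right (rpowInt γ t₀ hγ0 ht0 ht1.le) _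
    _ ≤ ENNReal.ofReal (t₀ ^ (-γ) * L ^ n / (γ * (n.factorial : ℝ))) := by
        rw [hD, ← ENNReal.ofReal_mul (mul_nonneg hc0 hLn)]
        apply ENNReal.ofReal_le_ofReal
        apply le_of_eq
        rw [mul_one_div, ← mul_div_assoc, div_div, mul_comm (n.factorial : ℝ) γ]
end
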